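/- arXiv:1311.2361 — 4 statements merged into one kernel-verified Lean document; each statement's English description precedes it below -/
import Mathlib

section
/- Let A be a noninvertible matrix of class S_n. Then p(A) = ∞ (i.e., every power A^ℓ is a partial isometry) if and only if A is unitarily similar to the n-by-n nilpotent Jordan block J_n. -/
open Matrix

noncomputable section

/-- An `ι`-by-`ι` complex matrix `A` is a *partial isometry* if `‖Ax‖ = ‖x‖` for every
vector `x` in the orthogonal complement of `ker A` (Euclidean structure). -/
def Matrix.IsPartialIsometry {ι : Type*} [Fintype ι] [DecidableEq ι]
    (A : Matrix ι ι ℂ) : Prop :=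
  ∀ x ∈ (LinearMap.ker (Matrix.toEuclideanLin A))ᗮ, ‖Matrix.toEuclideanLin A x‖ = ‖x‖

/-- The *power partial isometry index* `p(A)`: the supremum (in `ℕ∞`, possibly `⊤`) of the
nonnegative integers `j` such that `I, A, A², …, A^j` are all partial isometries. -/
def Matrix.pIndex {ι : Type*} [Fintype ι] [DecidableEq ι] (A : Matrix ι ι ℂ) : ℕ∞ :=
  sSup ((↑) '' {j : ℕ | ∀ i ≤ j, (A ^ i).IsPartialIsometry})

/-- The *ascent* `a(A)`: the smallest nonnegative integer `k` with `ker A^k = ker A^(k+1)`. -/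
def Matrix.ascent {ι : Type*} [Fintype ι] [DecidableEq ι] (A : Matrix ι ι ℂ) : ℕ :=
  sInf {k : ℕ | LinearMap.ker (Matrix.toEuclideanLin (A ^ k)) =
    LinearMap.ker (Matrix.toEuclideanLin (A ^ (k + 1)))}

/-- `A` is unitarily similar to `B` (allowing different, necessarily equipotent, index types):
`B = U* A U` for some unitary `U`. -/
def Matrix.UnitarilySimilarTo {ι κ : Type*} [Fintype ι] [Fintype κ] [DecidableEq ι]
    [DecidableEq κ] (A : Matrix ι ι ℂ) (B : Matrix κ κ ℂ) : Prop :=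
  ∃ U : Matrix ι κ ℂ, Uᴴ * U = 1 ∧ U * Uᴴ = 1 ∧ B = Uᴴ * A * U

/-- The `q`-by-`q` nilpotent Jordan block `J_q`. -/
def JordanBlock (q : ℕ) : Matrix (Fin q) (Fin q) ℂ :=
  Matrix.of fun a b => if (b : ℕ) = (a : ℕ) + 1 then 1 else 0

/-- `A` is of class `S_n`: a contraction whose eigenvalues all have moduli strictly
less than `1` and with `rank (1 - A*A) = 1`. -/
def Matrix.IsClassSn {n : ℕ} (A : Matrix (Fin n) (Fin n) ℂ) : Prop :=
  (∀ x : EuclideanSpace ℂ (Fin n), ‖Matrix.toEuclideanLin A x‖ ≤ ‖x‖) ∧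
  (∀ z ∈ spectrum ℂ A, ‖z‖ < 1) ∧
  (1 - Aᴴ * A).rank = 1


section Helpers

open scoped ComplexInnerProductSpace

namespace PPI

lemma teL_mul {ι : Type*} [Fintype ι] [DecidableEq ι] (M N : Matrix ι ι ℂ)
    (x : EuclideanSpace ℂ ι) :
    Matrix.toEuclideanLin (M * N) x = Matrix.toEuclideanLin M (Matrix.toEuclideanLin N x) := by
  simp [Matrix.toEuclideanLin_apply, Matrix.mulVec_mulVec]

lemma teL_one {ι : Type*} [Fintype ι] [DecidableEq ι] (x : EuclideanSpace ℂ ι) :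
    Matrix.toEuclideanLin (1 : Matrix ι ι ℂ) x = x := by
  simp [Matrix.toEuclideanLin_apply]

lemma teL_pow {ι : Type*} [Fintype ι] [DecidableEq ι] (M : Matrix ι ι ℂ) (k : ℕ) :
    Matrix.toEuclideanLin (M ^ k) = (Matrix.toEuclideanLin M) ^ k := by
  induction k with
  | zero => ext x; simp [teL_one]
  | succ k ih =>
      ext x i
      rw [pow_succ, pow_succ]
      rw [show ∀ y, (Matrix.toEuclideanLin M ^ k * Matrix.toEuclideanLin M) y
        = (Matrix.toEuclideanLin M ^ k) (Matrix.toEuclideanLin M y) from fun y => rfl]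
      rw [← ih, ← teL_mul]

lemma inner_teL {ι : Type*} [Fintype ι] [DecidableEq ι] {W : Matrix ι ι ℂ}
    (hW : Wᴴ * W = 1) (a b : EuclideanSpace ℂ ι) :
    ⟪Matrix.toEuclideanLin W a, Matrix.toEuclideanLin W b⟫ = ⟪a, b⟫ := by
  rw [EuclideanSpace.inner_eq_star_dotProduct, EuclideanSpace.inner_eq_star_dotProduct]
  simp only [Matrix.ofLp_toEuclideanLin_apply]
  rw [Matrix.star_mulVec, dotProduct_comm, ← Matrix.dotProduct_mulVec, Matrix.mulVec_mulVec, hW,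
    Matrix.one_mulVec, dotProduct_comm]

lemma norm_teL {ι : Type*} [Fintype ι] [DecidableEq ι] {W : Matrix ι ι ℂ}
    (hW : Wᴴ * W = 1) (a : EuclideanSpace ℂ ι) :
    ‖Matrix.toEuclideanLin W a‖ = ‖a‖ := by
  have h := inner_teL hW a a
  rw [inner_self_eq_norm_sq_to_K, inner_self_eq_norm_sq_to_K] at h
  have h2 : (‖Matrix.toEuclideanLin W a‖ : ℝ) ^ 2 = ‖a‖ ^ 2 := by exact_mod_cast h
  nlinarith [norm_nonneg (Matrix.toEuclideanLin W a), norm_nonneg a]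

/-- Partial isometry is preserved by unitary conjugation. -/
lemma isPartialIsometry_conj {ι : Type*} [Fintype ι] [DecidableEq ι]
    {U B : Matrix ι ι ℂ} (hU1 : Uᴴ * U = 1) (hU2 : U * Uᴴ = 1)
    (hB : B.IsPartialIsometry) : (U * B * Uᴴ).IsPartialIsometry := by
  intro x hx
  set u := Matrix.toEuclideanLin U
  set u' := Matrix.toEuclideanLin Uᴴ
  set S := Matrix.toEuclideanLin B
  have hU2' : (Uᴴ)ᴴ * Uᴴ = 1 := by rwa [Matrix.conjTranspose_conjTranspose]
  have hcomp : ∀ y, Matrix.toEuclideanLin (U * B * Uᴴ) y = u (S (u' y)) := by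
    intro y; rw [teL_mul, teL_mul]
  have hu'u : ∀ y, u' (u y) = y := by
    intro y; rw [show u' (u y) = Matrix.toEuclideanLin (Uᴴ * U) y from (teL_mul _ _ _).symm,
      hU1, teL_one]
  have huu' : ∀ y, u (u' y) = y := by
    intro y; rw [show u (u' y) = Matrix.toEuclideanLin (U * Uᴴ) y from (teL_mul _ _ _).symm,
      hU2, teL_one]
  have hmem : u' x ∈ (LinearMap.ker S)ᗮ := by
    intro w hw
    have hwker : u w ∈ LinearMap.ker (Matrix.toEuclideanLin (U * B * Uᴴ)) := by
      rw [LinearMap.mem_ker, hcomp, hu'u]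
      rw [LinearMap.mem_ker] at hw
      rw [hw, map_zero]
    have := hx (u w) hwker
    calc ⟪w, u' x⟫ = ⟪u w, u (u' x)⟫ := (inner_teL hU1 _ _).symm
    _ = ⟪u w, x⟫ := by rw [huu']
    _ = 0 := this
  rw [hcomp]
  rw [norm_teL hU1, hB _ hmem, norm_teL hU2']



lemma jordan_pow (q ℓ : ℕ) :
    (JordanBlock q) ^ ℓ = Matrix.of fun a b : Fin q =>
      if (b : ℕ) = (a : ℕ) + ℓ then 1 else 0 := by
  induction ℓ with
  | zero =>
      ext a b
      simp only [pow_zero, Matrix.one_apply, Matrix.of_apply, Nat.add_zero]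
      rcases eq_or_ne a b with h | h
      · simp [h]
      · rw [if_neg h, if_neg]
        simpa [Fin.ext_iff, eq_comm] using h
  | succ ℓ ih =>
      ext a b
      rw [pow_succ, ih]
      simp only [Matrix.mul_apply, Matrix.of_apply, JordanBlock]
      by_cases h : (a : ℕ) + ℓ < q
      · rw [Finset.sum_eq_single (⟨(a : ℕ) + ℓ, h⟩ : Fin q)]
        · simp only [if_pos rfl, one_mul, Matrix.of_apply]
          simp [Nat.add_assoc]
        · intro c _ hc
          rw [if_neg, zero_mul]
          intro hcontra
          exact hc (Fin.ext hcontra)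
        · simp
      · rw [Finset.sum_eq_zero, if_neg]
        · omega
        · intro c _
          rw [if_neg, zero_mul]
          omega


lemma jordan_pow_isPartialIsometry (q ℓ : ℕ) :
    Matrix.IsPartialIsometry ((JordanBlock q) ^ ℓ) := by
  intro x hx
  set S := Matrix.toEuclideanLin ((JordanBlock q) ^ ℓ) with hS
  have happ : ∀ (y : EuclideanSpace ℂ (Fin q)) (a : Fin q),
      S y a = if h : (a : ℕ) + ℓ < q then y ⟨(a : ℕ) + ℓ, h⟩ else 0 := by
    intro y a
    have h0 : S y a = ∑ b : Fin q, (if (b : ℕ) = (a : ℕ) + ℓ then 1 else 0) * y b := by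
      rw [hS, jordan_pow]
      simp [Matrix.toEuclideanLin_apply, Matrix.mulVec, dotProduct]
    rw [h0]
    by_cases h : (a : ℕ) + ℓ < q
    · rw [dif_pos h, Finset.sum_eq_single (⟨(a : ℕ) + ℓ, h⟩ : Fin q)]
      · simp
      · intro c _ hc
        rw [if_neg, zero_mul]
        exact fun hcon => hc (Fin.ext hcon)
      · simp
    · rw [dif_neg h, Finset.sum_eq_zero]
      intro c _
      rw [if_neg, zero_mul]
      omega
  -- coordinates below ℓ vanish on the orthocomplement of the kernel
  have hlow : ∀ c : Fin q, (c : ℕ) < ℓ → x c = 0 := by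
    intro c hc
    have hek : EuclideanSpace.single c (1 : ℂ) ∈ LinearMap.ker S := by
      rw [LinearMap.mem_ker]
      ext a
      rw [happ]
      by_cases h : (a : ℕ) + ℓ < q
      · rw [dif_pos h]
        rw [EuclideanSpace.single_apply, if_neg]
        · rfl
        · intro hcon
          have : (c : ℕ) = (a : ℕ) + ℓ := by rw [← hcon]
          omega
      · rw [dif_neg h]; rfl
    have h0 := hx _ hek
    rw [EuclideanSpace.inner_single_left] at h0
    simpa using h0
  -- sum identity
  have key : ∑ a : Fin q, ‖S x a‖ ^ 2 = ∑ b : Fin q, ‖x b‖ ^ 2 := by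
    have step1 : ∀ a : Fin q, ‖S x a‖ ^ 2
        = ∑ b : Fin q, (if (b : ℕ) = (a : ℕ) + ℓ then ‖x b‖ ^ 2 else 0) := by
      intro a
      rw [happ]
      by_cases h : (a : ℕ) + ℓ < q
      · rw [dif_pos h, Finset.sum_eq_single (⟨(a : ℕ) + ℓ, h⟩ : Fin q)]
        · simp
        · intro c _ hc
          rw [if_neg]
          exact fun hcon => hc (Fin.ext hcon)
        · simp
      · rw [dif_neg h, Finset.sum_eq_zero]
        · simp
        · intro c _
          rw [if_neg]
          omega
    calc ∑ a : Fin q, ‖S x a‖ ^ 2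
        = ∑ a : Fin q, ∑ b : Fin q, (if (b : ℕ) = (a : ℕ) + ℓ then ‖x b‖ ^ 2 else 0) := by
          exact Finset.sum_congr rfl fun a _ => step1 a
      _ = ∑ b : Fin q, ∑ a : Fin q, (if (b : ℕ) = (a : ℕ) + ℓ then ‖x b‖ ^ 2 else 0) :=
          Finset.sum_comm
      _ = ∑ b : Fin q, ‖x b‖ ^ 2 := by
          refine Finset.sum_congr rfl fun b _ => ?_
          by_cases hb : ℓ ≤ (b : ℕ)
          · have hlt : (b : ℕ) - ℓ < q := lt_of_le_of_lt (Nat.sub_le _ _) b.isLt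
            rw [Finset.sum_eq_single (⟨(b : ℕ) - ℓ, hlt⟩ : Fin q)]
            · simp only [Fin.val_mk]
              rw [if_pos (by omega)]
            · intro a _ ha
              rw [if_neg]
              intro hcon
              refine ha (Fin.ext ?_)
              simp only [Fin.val_mk]
              omega
            · simp
          · rw [Finset.sum_eq_zero, hlow b (by omega), norm_zero]
            · simp
            · intro a _
              rw [if_neg]
              omega
  rw [EuclideanSpace.norm_eq, EuclideanSpace.norm_eq]
  exact congrArg Real.sqrt key


lemma pIndex_eq_top_of_forall {ι : Type*} [Fintype ι] [DecidableEq ι]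
    (A : Matrix ι ι ℂ) (hall : ∀ i : ℕ, (A ^ i).IsPartialIsometry) : A.pIndex = ⊤ := by
  rw [Matrix.pIndex, sSup_eq_top]
  intro b hb
  lift b to ℕ using hb.ne
  exact ⟨((b + 1 : ℕ) : ℕ∞), ⟨b + 1, fun i _ => hall i, rfl⟩,
    by exact_mod_cast Nat.lt_succ_self b⟩

lemma pow_isPartialIsometry_of_similar {n : ℕ} {A : Matrix (Fin n) (Fin n) ℂ}
    (hsim : A.UnitarilySimilarTo (JordanBlock n)) (ℓ : ℕ) :
    (A ^ ℓ).IsPartialIsometry := by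
  obtain ⟨U, hU1, hU2, hJ⟩ := hsim
  have hUU : ∀ X : Matrix (Fin n) (Fin n) ℂ, Uᴴ * (U * X) = X := fun X => by
    rw [← Matrix.mul_assoc, hU1, Matrix.one_mul]
  have hUU' : ∀ X : Matrix (Fin n) (Fin n) ℂ, U * (Uᴴ * X) = X := fun X => by
    rw [← Matrix.mul_assoc, hU2, Matrix.one_mul]
  have hA : A = U * JordanBlock n * Uᴴ := by
    rw [hJ]
    simp only [Matrix.mul_assoc]
    rw [hU2, Matrix.mul_one, hUU']
  have key : A ^ ℓ = U * (JordanBlock n) ^ ℓ * Uᴴ := by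
    induction ℓ with
    | zero => rw [pow_zero, pow_zero, Matrix.mul_one, hU2]
    | succ k ih =>
        rw [pow_succ, pow_succ, ih, hA]
        simp only [Matrix.mul_assoc, hUU]
  rw [key]
  exact isPartialIsometry_conj hU1 hU2 (jordan_pow_isPartialIsometry n ℓ)

section Aux
open Module LinearMap
variable {E : Type*} [NormedAddCommGroup E] [InnerProductSpace ℂ E]


lemma ker_pow_mono (f : E →ₗ[ℂ] E) {i j : ℕ} (h : i ≤ j) :
    LinearMap.ker (f ^ i) ≤ LinearMap.ker (f ^ j) := by
  intro u hu
  rw [LinearMap.mem_ker] at hu ⊢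
  rw [← Nat.sub_add_cancel h, pow_add, Module.End.mul_apply, hu, map_zero]

lemma finrank_ker_pow_succ_le {K W : Type*} [Field K] [AddCommGroup W] [Module K W]
    [FiniteDimensional K W] (f : W →ₗ[K] W) (k : ℕ) :
    finrank K (LinearMap.ker (f ^ (k + 1))) ≤
      finrank K (LinearMap.ker (f ^ k)) + finrank K (LinearMap.ker f) := by
  have hmem : ∀ x : LinearMap.ker (f ^ (k + 1)), f ((f ^ k) (x : W)) = 0 := by
    intro x
    rw [← Module.End.mul_apply, ← pow_succ']
    exact x.2
  set ψ : (LinearMap.ker (f ^ (k + 1))) →ₗ[K] (LinearMap.ker f) :=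
    LinearMap.codRestrict _ ((f ^ k).comp (Submodule.subtype _))
      (fun x => LinearMap.mem_ker.mpr (hmem x)) with hψ
  have hrn := LinearMap.finrank_range_add_finrank_ker ψ
  have h1 : finrank K (LinearMap.range ψ) ≤ finrank K (LinearMap.ker f) :=
    Submodule.finrank_le _
  have h2 : finrank K (LinearMap.ker ψ) ≤ finrank K (LinearMap.ker (f ^ k)) := by
    have hker : ∀ x : LinearMap.ker ψ, (f ^ k) ((x : LinearMap.ker (f ^ (k + 1))) : W) = 0 := by
      intro x
      exact congrArg Subtype.val (LinearMap.mem_ker.mp x.2)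
    set χ : (LinearMap.ker ψ) →ₗ[K] (LinearMap.ker (f ^ k)) :=
      LinearMap.codRestrict _ ((Submodule.subtype _).comp (Submodule.subtype _))
        (fun x => LinearMap.mem_ker.mpr (hker x)) with hχ
    refine LinearMap.finrank_le_finrank_of_injective (f := χ) ?_
    intro a b hab
    have h3 : ((a : LinearMap.ker (f ^ (k + 1))) : W)
        = ((b : LinearMap.ker (f ^ (k + 1))) : W) :=
      congrArg (fun t : LinearMap.ker (f ^ k) => (t : W)) hab
    exact Subtype.ext (Subtype.ext h3)
  omega

lemma inner_map_of_isometryOn {f : E →ₗ[ℂ] E}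
    (h : ∀ x ∈ (LinearMap.ker f)ᗮ, ‖f x‖ = ‖x‖) {a b : E}
    (ha : a ∈ (LinearMap.ker f)ᗮ) (hb : b ∈ (LinearMap.ker f)ᗮ) :
    ⟪f a, f b⟫ = ⟪a, b⟫ := by
  set ι : ((LinearMap.ker f)ᗮ) →ₗᵢ[ℂ] E :=
    ⟨f.comp (Submodule.subtype _), fun v => h v.1 v.2⟩
  have := ι.inner_map_map ⟨a, ha⟩ ⟨b, hb⟩
  exact this


end Aux

lemma hPI_of_h {n : ℕ} {A : Matrix (Fin n) (Fin n) ℂ}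
    (h : ∀ ℓ : ℕ, 1 ≤ ℓ → (A ^ ℓ).IsPartialIsometry) (k : ℕ) :
    ∀ x ∈ (LinearMap.ker ((Matrix.toEuclideanLin A) ^ k))ᗮ,
      ‖((Matrix.toEuclideanLin A) ^ k) x‖ = ‖x‖ := by
  rcases Nat.eq_zero_or_pos k with rfl | hk
  · intro x _
    rw [pow_zero, Module.End.one_apply]
  · have h2 := h k hk
    rw [Matrix.IsPartialIsometry, teL_pow] at h2
    exact h2

lemma teL_pow_card_eq_zero {n : ℕ} {A : Matrix (Fin n) (Fin n) ℂ}
    (hspec : ∀ z ∈ spectrum ℂ A, ‖z‖ < 1)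
    (h : ∀ ℓ : ℕ, 1 ≤ ℓ → (A ^ ℓ).IsPartialIsometry) :
    (Matrix.toEuclideanLin A) ^ n = 0 := by
  set T := Matrix.toEuclideanLin A with hT
  have hfr : Module.finrank ℂ (EuclideanSpace ℂ (Fin n)) = n := finrank_euclideanSpace_fin
  have hstab : ∀ k, n ≤ k → LinearMap.ker (T ^ k) = LinearMap.ker (T ^ n) := by
    intro k hk
    have h1 := Module.End.ker_pow_eq_ker_pow_finrank_of_le (f := T) (m := k)
      (by rw [hfr]; exact hk)
    have h2 := Module.End.ker_pow_eq_ker_pow_finrank_of_le (f := T) (m := n)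
      (by rw [hfr])
    rw [h1, h2]
  by_contra hTn
  have hR : LinearMap.range (T ^ n) ≠ ⊥ := fun hc => hTn (LinearMap.range_eq_bot.mp hc)
  have hInv : ∀ v ∈ LinearMap.range (T ^ n), T v ∈ LinearMap.range (T ^ n) := by
    rintro v ⟨w, rfl⟩
    exact ⟨T w, by rw [← Module.End.mul_apply, ← pow_succ, pow_succ', Module.End.mul_apply]⟩
  haveI : Nontrivial (LinearMap.range (T ^ n)) := Submodule.nontrivial_iff_ne_bot.mpr hR
  obtain ⟨μ, hμ⟩ := Module.End.exists_eigenvalue (T.restrict hInv)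
  obtain ⟨v, hv⟩ := hμ.exists_hasEigenvector
  have hveq : T (v : EuclideanSpace ℂ (Fin n)) = μ • (v : EuclideanSpace ℂ (Fin n)) := by
    have h1 := Module.End.mem_eigenspace_iff.mp hv.1
    calc T (v : EuclideanSpace ℂ (Fin n)) = ((T.restrict hInv) v : EuclideanSpace ℂ (Fin n)) :=
        (LinearMap.restrict_coe_apply _ _ _).symm
      _ = ((μ • v : LinearMap.range (T ^ n)) : EuclideanSpace ℂ (Fin n)) := by rw [h1]
      _ = μ • (v : EuclideanSpace ℂ (Fin n)) := rfl
  have hvne : (v : EuclideanSpace ℂ (Fin n)) ≠ 0 := fun hc => hv.2 (Subtype.ext hc)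
  have hiter : ∀ k, (T ^ k) (v : EuclideanSpace ℂ (Fin n))
      = (μ ^ k) • (v : EuclideanSpace ℂ (Fin n)) := by
    intro k
    induction k with
    | zero => simp
    | succ k ih =>
        rw [pow_succ', Module.End.mul_apply, ih, LinearMap.map_smul, hveq, smul_smul, ← pow_succ]
  have hμ0 : μ ≠ 0 := by
    intro h0
    obtain ⟨w, hw⟩ := v.2
    have hw1 : (T ^ (n + 1)) w = 0 := by
      rw [pow_succ', Module.End.mul_apply, hw, hveq, h0, zero_smul]
    have hw2 : w ∈ LinearMap.ker (T ^ n) := by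
      rw [← hstab (n + 1) (Nat.le_succ n)]
      exact LinearMap.mem_ker.mpr hw1
    exact hvne (by rw [← hw]; exact LinearMap.mem_ker.mp hw2)
  have hμspec : μ ∈ spectrum ℂ A := by
    rw [spectrum.mem_iff]
    intro hunit
    have hdet : ((algebraMap ℂ (Matrix (Fin n) (Fin n) ℂ)) μ - A).det = 0 := by
      rw [← Matrix.exists_mulVec_eq_zero_iff]
      refine ⟨(WithLp.equiv 2 (Fin n → ℂ)) (v : EuclideanSpace ℂ (Fin n)), ?_, ?_⟩
      · intro hc
        exact hvne ((WithLp.equiv 2 (Fin n → ℂ)).injective (by simpa using hc))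
      · have hAv : A *ᵥ ((WithLp.equiv 2 (Fin n → ℂ)) (v : EuclideanSpace ℂ (Fin n)))
            = (WithLp.equiv 2 (Fin n → ℂ)) (μ • (v : EuclideanSpace ℂ (Fin n))) := by
          rw [WithLp.equiv_apply, WithLp.equiv_apply, ← Matrix.ofLp_toEuclideanLin_apply]
          exact congrArg _ hveq
        rw [Matrix.sub_mulVec, Algebra.algebraMap_eq_smul_one, Matrix.smul_mulVec,
          Matrix.one_mulVec, hAv]
        ext i
        simp
    have h1 := (Matrix.isUnit_iff_isUnit_det _).mp hunit
    rw [hdet] at h1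
    exact (not_isUnit_zero : ¬ IsUnit (0 : ℂ)) h1
  have hμ1 : ‖μ‖ < 1 := hspec μ hμspec
  obtain ⟨y, hy, z, hz, hyz⟩ :=
    (LinearMap.ker (T ^ n)).exists_add_mem_mem_orthogonal (v : EuclideanSpace ℂ (Fin n))
  have hnorm : ∀ k, n ≤ k → ‖z‖ = ‖μ‖ ^ k * ‖(v : EuclideanSpace ℂ (Fin n))‖ := by
    intro k hk
    have hzo : z ∈ (LinearMap.ker (T ^ k))ᗮ := by rw [hstab k hk]; exact hz
    have h1 := hPI_of_h h k z hzo
    have h2 : (T ^ k) (v : EuclideanSpace ℂ (Fin n)) = (T ^ k) z := by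
      rw [hyz, map_add, LinearMap.mem_ker.mp (by rw [hstab k hk]; exact hy), zero_add]
    rw [← h1, ← h2, hiter k, norm_smul, norm_pow]
  have e1 := hnorm n le_rfl
  have e2 := hnorm (n + 1) (Nat.le_succ n)
  rw [e1, pow_succ] at e2
  have hvn : ‖(v : EuclideanSpace ℂ (Fin n))‖ ≠ 0 := norm_ne_zero_iff.mpr hvne
  have hμn : ‖μ‖ ^ n ≠ 0 := pow_ne_zero _ (norm_ne_zero_iff.mpr hμ0)
  have hne : ‖μ‖ ^ n * ‖(v : EuclideanSpace ℂ (Fin n))‖ ≠ 0 := mul_ne_zero hμn hvn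
  have h4 : (‖μ‖ ^ n * ‖(v : EuclideanSpace ℂ (Fin n))‖) * 1
      = (‖μ‖ ^ n * ‖(v : EuclideanSpace ℂ (Fin n))‖) * ‖μ‖ := by
    linear_combination e2
  have h5 : (1 : ℝ) = ‖μ‖ := mul_left_cancel₀ hne h4
  linarith [hμ1]

open scoped ComplexInnerProductSpace in
lemma forward_similar {n : ℕ} {A : Matrix (Fin n) (Fin n) ℂ} (hA : A.IsClassSn)
    (h : ∀ ℓ : ℕ, 1 ≤ ℓ → (A ^ ℓ).IsPartialIsometry) :
    A.UnitarilySimilarTo (JordanBlock n) := by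
  obtain ⟨hcon, hspec, hrank⟩ := hA
  set T := Matrix.toEuclideanLin A with hT
  have hn : 1 ≤ n := by
    have h1 := Matrix.rank_le_card_width (1 - Aᴴ * A)
    rw [hrank] at h1
    simpa using h1
  have hnil : T ^ n = 0 := teL_pow_card_eq_zero hspec h
  have hPI : ∀ k : ℕ, ∀ x ∈ (LinearMap.ker (T ^ k))ᗮ, ‖(T ^ k) x‖ = ‖x‖ := hPI_of_h h
  -- the kernel of T has dimension at most one
  have hk1 : Module.finrank ℂ (LinearMap.ker T) ≤ 1 := by
    set B := (1 : Matrix (Fin n) (Fin n) ℂ) - Aᴴ * A with hB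
    have hval : ∀ x : EuclideanSpace ℂ (Fin n), T x = 0 →
        B *ᵥ ((WithLp.equiv 2 (Fin n → ℂ)) x) = (WithLp.equiv 2 (Fin n → ℂ)) x := by
      intro x hx
      have hAx : A *ᵥ ((WithLp.equiv 2 (Fin n → ℂ)) x) = 0 := by
        rw [WithLp.equiv_apply, ← Matrix.ofLp_toEuclideanLin_apply,
          show Matrix.toEuclideanLin A x = 0 from hx]
        simp
      rw [hB, Matrix.sub_mulVec, Matrix.one_mulVec, ← Matrix.mulVec_mulVec, hAx,
        Matrix.mulVec_zero, sub_zero]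
    set φ : LinearMap.ker T →ₗ[ℂ] LinearMap.range B.mulVecLin :=
      LinearMap.codRestrict _
        ((WithLp.linearEquiv 2 ℂ (Fin n → ℂ)).toLinearMap.comp (Submodule.subtype _))
        (fun x => ⟨(WithLp.equiv 2 (Fin n → ℂ)) (x : EuclideanSpace ℂ (Fin n)),
          by rw [Matrix.mulVecLin_apply]; exact hval _ (LinearMap.mem_ker.mp x.2)⟩) with hφ
    have hinj : Function.Injective φ := by
      intro a b hab
      have h3 := congrArg (fun t : LinearMap.range B.mulVecLin => (t : Fin n → ℂ)) hab
      exact Subtype.ext ((WithLp.equiv 2 (Fin n → ℂ)).injective h3)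
    have h4 := LinearMap.finrank_le_finrank_of_injective hinj
    rwa [show Module.finrank ℂ (LinearMap.range B.mulVecLin) = B.rank from rfl, hrank] at h4
  -- kernels of powers grow slowly
  have hchain : ∀ k : ℕ, Module.finrank ℂ (LinearMap.ker (T ^ k)) ≤ k := by
    intro k
    induction k with
    | zero =>
        rw [pow_zero]
        rw [show LinearMap.ker (1 : EuclideanSpace ℂ (Fin n) →ₗ[ℂ] EuclideanSpace ℂ (Fin n)) = ⊥
          from LinearMap.ker_id]
        simp
    | succ k ih =>
        have h5 := finrank_ker_pow_succ_le T k
        omega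
  have hne_top : LinearMap.ker (T ^ (n - 1)) ≠ ⊤ := by
    intro hc
    have h5 : Module.finrank ℂ (LinearMap.ker (T ^ (n - 1)))
        = Module.finrank ℂ (EuclideanSpace ℂ (Fin n)) := by rw [hc]; exact finrank_top ℂ _
    rw [finrank_euclideanSpace_fin] at h5
    have h6 := hchain (n - 1)
    omega
  obtain ⟨x₀, hx₀m, hx₀⟩ := (Submodule.ne_bot_iff _).mp
    (fun hc => hne_top (Submodule.orthogonal_eq_bot_iff.mp hc))
  set x : EuclideanSpace ℂ (Fin n) := ((‖x₀‖ : ℂ))⁻¹ • x₀ with hx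
  have hxm : x ∈ (LinearMap.ker (T ^ (n - 1)))ᗮ := Submodule.smul_mem _ _ hx₀m
  have hx1 : ‖x‖ = 1 := norm_smul_inv_norm (𝕜 := ℂ) hx₀
  have hxo : ∀ k, k ≤ n - 1 → x ∈ (LinearMap.ker (T ^ k))ᗮ :=
    fun k hk => Submodule.orthogonal_le (ker_pow_mono T hk) hxm
  have hnorm1 : ∀ k, k ≤ n - 1 → ‖(T ^ k) x‖ = 1 := fun k hk => by
    rw [hPI k x (hxo k hk), hx1]
  have hpow_zero : ∀ e, n ≤ e → (T ^ e) x = 0 := by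
    intro e he
    rw [← Nat.sub_add_cancel he, pow_add, Module.End.mul_apply,
      show (T ^ n) x = 0 from by rw [hnil]; rfl, map_zero]
  have horth : ∀ p q : ℕ, p < q → q ≤ n - 1 → ⟪(T ^ p) x, (T ^ q) x⟫ = 0 := by
    intro p q hpq hq
    obtain ⟨y0, hy0, y1, hy1, hsplit⟩ :=
      (LinearMap.ker (T ^ p)).exists_add_mem_mem_orthogonal ((T ^ (q - p)) x)
    have hTq : (T ^ q) x = (T ^ p) ((T ^ (q - p)) x) := by
      rw [← Module.End.mul_apply, ← pow_add, Nat.add_sub_cancel' (le_of_lt hpq)]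
    have hyk : (T ^ (q - p)) x ∈ LinearMap.ker (T ^ (n - 1)) := by
      rw [LinearMap.mem_ker, ← Module.End.mul_apply, ← pow_add]
      exact hpow_zero _ (by omega)
    have hy0k : y0 ∈ LinearMap.ker (T ^ (n - 1)) := ker_pow_mono T (by omega) hy0
    have hx_y : ⟪x, (T ^ (q - p)) x⟫ = 0 := inner_eq_zero_symm.mp (hxm _ hyk)
    have hx_y0 : ⟪x, y0⟫ = 0 := inner_eq_zero_symm.mp (hxm _ hy0k)
    have hx_y1 : ⟪x, y1⟫ = 0 := by
      have h7 : ⟪x, y0⟫ + ⟪x, y1⟫ = 0 := by rw [← inner_add_right, ← hsplit]; exact hx_y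
      rwa [hx_y0, zero_add] at h7
    calc ⟪(T ^ p) x, (T ^ q) x⟫ = ⟪(T ^ p) x, (T ^ p) y1⟫ := by
          rw [hTq, hsplit, map_add, LinearMap.mem_ker.mp hy0, zero_add]
      _ = ⟪x, y1⟫ := inner_map_of_isometryOn (hPI p) (hxo p (by omega)) hy1
      _ = 0 := hx_y1
  -- the orthonormal family
  set g : Fin n → EuclideanSpace ℂ (Fin n) := fun i => (T ^ (n - 1 - (i : ℕ))) x with hg
  have hgnorm : ∀ i : Fin n, ‖g i‖ = 1 := fun i => hnorm1 _ (by omega)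
  have hgorth : ∀ i j : Fin n, i ≠ j → ⟪g i, g j⟫ = 0 := by
    intro i j hij
    have hij' : (i : ℕ) ≠ (j : ℕ) := fun hc => hij (Fin.ext hc)
    have hi := i.isLt
    have hj := j.isLt
    rcases lt_or_gt_of_ne hij' with hlt | hgt
    · exact inner_eq_zero_symm.mp
        (horth (n - 1 - (j : ℕ)) (n - 1 - (i : ℕ)) (by omega) (by omega))
    · exact horth _ _ (by omega) (by omega)
  set U : Matrix (Fin n) (Fin n) ℂ := Matrix.of (fun a b : Fin n => g b a) with hU
  have hU1 : Uᴴ * U = 1 := by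
    ext i j
    rw [Matrix.mul_apply, Matrix.one_apply]
    have hsum : ∑ a : Fin n, Uᴴ i a * U a j = ⟪g i, g j⟫ := by
      rw [PiLp.inner_apply]
      refine Finset.sum_congr rfl fun a _ => ?_
      rw [hU, Matrix.conjTranspose_apply, RCLike.inner_apply']
      rfl
    rw [hsum]
    by_cases hij : i = j
    · rw [if_pos hij, hij, inner_self_eq_norm_sq_to_K, hgnorm]
      norm_num
    · rw [if_neg hij, hgorth i j hij]
  have hAU : A * U = U * JordanBlock n := by
    ext a j
    have hL : (A * U) a j = (T (g j)) a := by
      rw [Matrix.mul_apply]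
      have h8 : T (g j) a = ∑ b : Fin n, A a b * g j b := by
        simp [hT, Matrix.toEuclideanLin_apply, Matrix.mulVec, dotProduct]
      rw [h8]
      rfl
    have hTgj : T (g j) = (T ^ (n - (j : ℕ))) x := by
      rw [hg]
      rw [show T ((T ^ (n - 1 - (j : ℕ))) x) = (T ^ ((n - 1 - (j : ℕ)) + 1)) x from by
        rw [pow_succ', Module.End.mul_apply]]
      congr 2
      omega
    rw [hL, hTgj]
    rcases Nat.eq_zero_or_pos (j : ℕ) with hj0 | hjpos
    · rw [show n - (j : ℕ) = n from by omega, show (T ^ n) x = 0 from by rw [hnil]; rfl]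
      rw [Matrix.mul_apply, Finset.sum_eq_zero]
      · rfl
      · intro b _
        rw [hU]
        have : JordanBlock n b j = 0 := by
          rw [JordanBlock, Matrix.of_apply, if_neg]
          omega
        rw [this, mul_zero]
    · rw [Matrix.mul_apply, Finset.sum_eq_single (⟨(j : ℕ) - 1, by omega⟩ : Fin n)]
      · have hJ : JordanBlock n ⟨(j : ℕ) - 1, by omega⟩ j = 1 := by
          rw [JordanBlock, Matrix.of_apply, if_pos]
          simp only [Fin.val_mk]
          omega
        rw [hJ, mul_one, hU]
        show (T ^ (n - (j : ℕ))) x a = g ⟨(j : ℕ) - 1, by omega⟩ a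
        rw [hg]
        show (T ^ (n - (j : ℕ))) x a = (T ^ (n - 1 - ((j : ℕ) - 1))) x a
        rw [show n - 1 - ((j : ℕ) - 1) = n - (j : ℕ) from by omega]
      · intro b _ hb
        have : JordanBlock n b j = 0 := by
          rw [JordanBlock, Matrix.of_apply, if_neg]
          intro hc
          exact hb (Fin.ext (by simp only [Fin.val_mk]; omega))
        rw [this, mul_zero]
      · simp
  refine ⟨U, hU1, mul_eq_one_comm.mp hU1, ?_⟩
  calc JordanBlock n = (Uᴴ * U) * JordanBlock n := by rw [hU1, Matrix.one_mul]
    _ = Uᴴ * (U * JordanBlock n) := by rw [Matrix.mul_assoc]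
    _ = Uᴴ * (A * U) := by rw [hAU]
    _ = Uᴴ * A * U := by rw [Matrix.mul_assoc]

end PPI

end Helpers
/-- **Proposition 3.1 (c).** If `A` is a noninvertible matrix of class `S_n`, then
`p(A) = ∞` (i.e. every power of `A` is a partial isometry) if and only if `A` is unitarily
similar to the Jordan block `J_n`. -/
theorem pIndex_eq_top_iff_unitarilySimilar_jordan (n : ℕ) (A : Matrix (Fin n) (Fin n) ℂ)
    (hA : A.IsClassSn) (hni : ¬ IsUnit A) :
    (A.pIndex = ⊤ ∧ ∀ ℓ : ℕ, 1 ≤ ℓ → (A ^ ℓ).IsPartialIsometry) ↔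
      A.UnitarilySimilarTo (JordanBlock n) := by
  constructor
  · rintro ⟨-, hall⟩
    exact PPI.forward_similar hA hall
  · intro hsim
    have hall : ∀ i : ℕ, (A ^ i).IsPartialIsometry :=
      fun i => PPI.pow_isPartialIsometry_of_similar hsim i
    exact ⟨PPI.pIndex_eq_top_of_forall A hall, fun ℓ _ => hall ℓ⟩

end
end

section
/- Let A′ be the n-by-n upper-triangular block matrix on ℂ^{n₁} ⊕ ⋯ ⊕ ℂ^{n_j} ⊕ ℂ^m whose (ℓ, ℓ+1) block is A_ℓ for 1 ≤ ℓ ≤ j − 1, whose (j, j+1) block is B, whose (j+1, j+1) block is C, and all of whose other blocks are zero, where A_ℓ*A_ℓ = I_{n_{ℓ+1}} for 1 ≤ ℓ ≤ j − 1 and B*B + C*C = I_m. Then for every integer ℓ ≥ 0, the power A′^{j+ℓ} is a partial isometry if and only if C^ℓ is a partial isometry. -/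
open Matrix
open scoped InnerProductSpace
set_option maxHeartbeats 1000000

noncomputable section

lemma toEuclideanLin_mul' {ι : Type*} [Fintype ι] [DecidableEq ι] (X Y : Matrix ι ι ℂ) :
    Matrix.toEuclideanLin (X * Y) =
      (Matrix.toEuclideanLin X).comp (Matrix.toEuclideanLin Y) := by
  apply LinearMap.ext
  intro v
  simp [Matrix.toEuclideanLin_apply, Matrix.mulVec_mulVec]

lemma inner_map_of_norm_map {ι : Type*} [Fintype ι] (K : Submodule ℂ (EuclideanSpace ℂ ι))
    (f : EuclideanSpace ℂ ι →ₗ[ℂ] EuclideanSpace ℂ ι)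
    (h : ∀ x ∈ Kᗮ, ‖f x‖ = ‖x‖) (v w : EuclideanSpace ℂ ι) (hv : v ∈ Kᗮ) (hw : w ∈ Kᗮ) :
    ⟪f v, f w⟫_ℂ = ⟪v, w⟫_ℂ := by
  have e1 : ‖f v + f w‖ = ‖v + w‖ := by rw [← map_add]; exact h _ (Kᗮ.add_mem hv hw)
  have e2 : ‖f v - f w‖ = ‖v - w‖ := by rw [← map_sub]; exact h _ (Kᗮ.sub_mem hv hw)
  have e3 : ‖f v - (Complex.I : ℂ) • f w‖ = ‖v - (Complex.I : ℂ) • w‖ := by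
    rw [← f.map_smul, ← map_sub]; exact h _ (Kᗮ.sub_mem hv (Kᗮ.smul_mem _ hw))
  have e4 : ‖f v + (Complex.I : ℂ) • f w‖ = ‖v + (Complex.I : ℂ) • w‖ := by
    rw [← f.map_smul, ← map_add]; exact h _ (Kᗮ.add_mem hv (Kᗮ.smul_mem _ hw))
  rw [inner_eq_sum_norm_sq_div_four, inner_eq_sum_norm_sq_div_four]
  rw [show (RCLike.I : ℂ) = Complex.I from rfl, e1, e2, e3, e4]

lemma isPartialIsometry_iff_idem {ι : Type*} [Fintype ι] [DecidableEq ι] (M : Matrix ι ι ℂ) :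
    M.IsPartialIsometry ↔ (Mᴴ * M) * (Mᴴ * M) = Mᴴ * M := by
  set f := Matrix.toEuclideanLin M with hf
  set p := Matrix.toEuclideanLin (Mᴴ * M) with hp
  set K := LinearMap.ker f with hK
  have hpff : ∀ x y : EuclideanSpace ℂ ι, ⟪p x, y⟫_ℂ = ⟪f x, f y⟫_ℂ := by
    intro x y
    rw [hp, toEuclideanLin_mul', LinearMap.comp_apply,
      Matrix.toEuclideanLin_conjTranspose_eq_adjoint, LinearMap.adjoint_inner_left]
  have hpker : ∀ x : EuclideanSpace ℂ ι, x ∈ K → p x = 0 := by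
    intro x hx
    rw [hp, toEuclideanLin_mul', LinearMap.comp_apply, ← hf,
      LinearMap.mem_ker.mp hx, map_zero]
  constructor
  · intro h
    have hinner : ∀ v w : EuclideanSpace ℂ ι, v ∈ Kᗮ → w ∈ Kᗮ →
        ⟪f v, f w⟫_ℂ = ⟪v, w⟫_ℂ := fun v w hv hw => inner_map_of_norm_map K f h v w hv hw
    have hfix : ∀ v : EuclideanSpace ℂ ι, v ∈ Kᗮ → p v = v := by
      intro v hv
      apply ext_inner_right ℂ
      intro w
      rw [hpff]
      set w₁ : EuclideanSpace ℂ ι := (K.orthogonalProjectionOnto w : EuclideanSpace ℂ ι) with hw₁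
      have hw₂ : w - w₁ ∈ Kᗮ := Submodule.sub_starProjection_mem_orthogonal w
      have hfw1 : f w₁ = 0 := LinearMap.mem_ker.mp (K.orthogonalProjectionOnto w).2
      have hw' : w₁ + (w - w₁) = w := by abel
      calc ⟪f v, f w⟫_ℂ
          = ⟪f v, f w₁ + f (w - w₁)⟫_ℂ := by rw [← map_add, hw']
        _ = ⟪f v, f (w - w₁)⟫_ℂ := by rw [hfw1, zero_add]
        _ = ⟪v, w - w₁⟫_ℂ := hinner _ _ hv hw₂
        _ = ⟪v, w⟫_ℂ - ⟪v, w₁⟫_ℂ := by rw [inner_sub_right]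
        _ = ⟪v, w⟫_ℂ := by
            rw [Submodule.inner_left_of_mem_orthogonal (K.orthogonalProjectionOnto w).2 hv, sub_zero]
    apply Matrix.toEuclideanLin.injective
    rw [toEuclideanLin_mul', ← hp]
    apply LinearMap.ext
    intro x
    set x₁ : EuclideanSpace ℂ ι := (K.orthogonalProjectionOnto x : EuclideanSpace ℂ ι) with hx₁
    have hdecomp : x - x₁ ∈ Kᗮ := Submodule.sub_starProjection_mem_orthogonal x
    have h1 : p x = x - x₁ := by
      have hx' : x₁ + (x - x₁) = x := by abel
      have hsplit : p x = p x₁ + p (x - x₁) := by rw [← map_add, hx']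
      rw [hsplit, hpker _ (K.orthogonalProjectionOnto x).2, zero_add, hfix _ hdecomp]
    rw [LinearMap.comp_apply, h1, hfix _ hdecomp]
  · intro h x hx
    have hpp : ∀ y, p (p y) = p y := by
      intro y
      have h2 := congrArg Matrix.toEuclideanLin h
      rw [toEuclideanLin_mul', ← hp] at h2
      exact congrFun (congrArg DFunLike.coe h2) y
    have hu : x - p x ∈ K := by
      have hpu : p (x - p x) = 0 := by rw [map_sub, hpp, sub_self]
      rw [hK, LinearMap.mem_ker]
      have h3 : ⟪f (x - p x), f (x - p x)⟫_ℂ = 0 := by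
        rw [← hpff, hpu, inner_zero_left]
      exact inner_self_eq_zero.mp h3
    have h0 : ⟪x - p x, x⟫_ℂ = 0 := Submodule.inner_right_of_mem_orthogonal hu hx
    have h1 : ⟪x, x⟫_ℂ = ⟪p x, x⟫_ℂ := by
      rw [inner_sub_left, sub_eq_zero] at h0
      exact h0
    have h2 : ⟪f x, f x⟫_ℂ = ⟪x, x⟫_ℂ := by rw [← hpff]; exact h1.symm
    have h3 : ‖f x‖ ^ 2 = ‖x‖ ^ 2 := by
      rw [← inner_self_eq_norm_sq (𝕜 := ℂ) (f x), ← inner_self_eq_norm_sq (𝕜 := ℂ) x, h2]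
    nlinarith [norm_nonneg x, norm_nonneg (f x)]


/-- For the block matrix `A'` on `ℂ^{n₁} ⊕ ⋯ ⊕ ℂ^{n_j} ⊕ ℂ^m` with superdiagonal blocks
`A₁, …, A_{j-1}` (with `A_ℓ* A_ℓ = I`), `(j, j+1)` block `B`, `(j+1, j+1)` block `C`
(with `B*B + C*C = I`), and all other blocks zero: for every `ℓ ≥ 0`, `A'^(j+ℓ)` is a
partial isometry if and only if `C^ℓ` is one. (Block rows/columns are indexed by
`Fin j ⊕ Fin m`-style indices, `0`-based, so the paper's block `ℓ` is index `ℓ - 1`.) -/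
theorem pow_isPartialIsometry_iff_of_blockForm (j m : ℕ) (hj : 0 < j) (ns : Fin j → ℕ)
    (A' : Matrix ((Σ ℓ : Fin j, Fin (ns ℓ)) ⊕ Fin m) ((Σ ℓ : Fin j, Fin (ns ℓ)) ⊕ Fin m) ℂ)
    (As : ∀ (ℓ : Fin j) (h : (ℓ : ℕ) + 1 < j),
      Matrix (Fin (ns ℓ)) (Fin (ns ⟨(ℓ : ℕ) + 1, h⟩)) ℂ)
    (B : Matrix (Fin (ns ⟨j - 1, Nat.sub_lt hj Nat.one_pos⟩)) (Fin m) ℂ)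
    (C : Matrix (Fin m) (Fin m) ℂ)
    (hAs : ∀ (ℓ : Fin j) (h : (ℓ : ℕ) + 1 < j), (As ℓ h)ᴴ * As ℓ h = 1)
    (hBC : Bᴴ * B + Cᴴ * C = 1)
    (hblk₁ : ∀ (ℓ : Fin j) (h : (ℓ : ℕ) + 1 < j) (a : Fin (ns ℓ))
      (b : Fin (ns ⟨(ℓ : ℕ) + 1, h⟩)),
      A' (Sum.inl ⟨ℓ, a⟩) (Sum.inl ⟨⟨(ℓ : ℕ) + 1, h⟩, b⟩) = As ℓ h a b)
    (hblk₂ : ∀ (ℓ ℓ' : Fin j) (a : Fin (ns ℓ)) (b : Fin (ns ℓ')), (ℓ' : ℕ) ≠ (ℓ : ℕ) + 1 →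
      A' (Sum.inl ⟨ℓ, a⟩) (Sum.inl ⟨ℓ', b⟩) = 0)
    (hblk₃ : ∀ (a : Fin (ns ⟨j - 1, Nat.sub_lt hj Nat.one_pos⟩)) (b : Fin m),
      A' (Sum.inl ⟨⟨j - 1, Nat.sub_lt hj Nat.one_pos⟩, a⟩) (Sum.inr b) = B a b)
    (hblk₄ : ∀ (ℓ : Fin j), (ℓ : ℕ) ≠ j - 1 → ∀ (a : Fin (ns ℓ)) (b : Fin m),
      A' (Sum.inl ⟨ℓ, a⟩) (Sum.inr b) = 0)
    (hblk₅ : ∀ a b : Fin m, A' (Sum.inr a) (Sum.inr b) = C a b)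
    (hblk₆ : ∀ (a : Fin m) (ℓ : Fin j) (b : Fin (ns ℓ)), A' (Sum.inr a) (Sum.inl ⟨ℓ, b⟩) = 0) :
    ∀ ℓ : ℕ, (A' ^ (j + ℓ)).IsPartialIsometry ↔ (C ^ ℓ).IsPartialIsometry := by
  have hstep : ∀ k, k < j →
      A'ᴴ * (Matrix.diagonal (Sum.elim
        (fun s : Σ ℓ : Fin j, Fin (ns ℓ) => if (s.1 : ℕ) < k then (0:ℂ) else 1)
        (fun _ : Fin m => if j < k then (0:ℂ) else 1)) * A')
    = Matrix.diagonal (Sum.elim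
        (fun s : Σ ℓ : Fin j, Fin (ns ℓ) => if (s.1 : ℕ) < k + 1 then (0:ℂ) else 1)
        (fun _ : Fin m => if j < k + 1 then (0:ℂ) else 1)) := by
    intro k hk
    ext c c'
    rw [Matrix.mul_apply]
    simp only [Matrix.conjTranspose_apply, Matrix.diagonal_mul]
    rw [Fintype.sum_sum_type]
    rw [← Finset.univ_sigma_univ, Finset.sum_sigma]
    simp only [Sum.elim_inl, Sum.elim_inr]
    rcases c with ⟨ℓ, b⟩ | b <;> rcases c' with ⟨ℓ', b'⟩ | b'
    · -- inl inl
      simp only [hblk₆, star_zero, zero_mul, Finset.sum_const_zero, add_zero,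
        Matrix.diagonal_apply]
      by_cases hl0 : (ℓ : ℕ) = 0
      · have hrhs : (if (Sum.inl ⟨ℓ, b⟩ : (Σ ℓ : Fin j, Fin (ns ℓ)) ⊕ Fin m) = Sum.inl ⟨ℓ', b'⟩
            then Sum.elim (fun s : Σ ℓ : Fin j, Fin (ns ℓ) => if (s.1 : ℕ) < k + 1 then (0:ℂ) else 1)
              (fun _ : Fin m => if j < k + 1 then (0:ℂ) else 1) (Sum.inl ⟨ℓ, b⟩) else 0) = 0 := by
          by_cases h : (Sum.inl ⟨ℓ, b⟩ : (Σ ℓ : Fin j, Fin (ns ℓ)) ⊕ Fin m) = Sum.inl ⟨ℓ', b'⟩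
          · rw [if_pos h, Sum.elim_inl,
              if_pos (show ((⟨ℓ, b⟩ : Σ ℓ : Fin j, Fin (ns ℓ)).1 : ℕ) < k + 1 by
                have h9 : ((⟨ℓ, b⟩ : Σ ℓ : Fin j, Fin (ns ℓ)).1 : ℕ) = (ℓ : ℕ) := rfl
                omega)]
          · rw [if_neg h]
        rw [hrhs]
        refine Finset.sum_eq_zero fun ℓ'' _ => Finset.sum_eq_zero fun a _ => ?_
        rw [hblk₂ _ _ _ _ (by omega)]
        simp
      · -- ℓ ≥ 1 : destructure ℓ as lq+1
        obtain ⟨lv, hlv⟩ := ℓ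
        simp only [] at hl0
        obtain ⟨lq, rfl⟩ : ∃ q, lv = q + 1 := ⟨lv - 1, by omega⟩
        have hlq : lq < j := by omega
        rw [Finset.sum_eq_single_of_mem (⟨lq, hlq⟩ : Fin j) (Finset.mem_univ _)
          (fun x _ hx => Finset.sum_eq_zero fun a _ => by
            rw [hblk₂ _ _ _ _ (fun hcon => hx (Fin.ext (show (x : ℕ) = ((⟨lq, hlq⟩ : Fin j) : ℕ) by
              have h9 : ((⟨lq, hlq⟩ : Fin j) : ℕ) = lq := rfl
              have h8 : ((⟨lq + 1, hlv⟩ : Fin j) : ℕ) = lq + 1 := rfl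
              omega)))]
            simp)]
        by_cases hℓ' : (ℓ' : ℕ) = lq + 1
        · have hℓ'eq : ℓ' = ⟨lq + 1, hlv⟩ := Fin.ext hℓ'
          subst hℓ'eq
          have hreq : ∀ (a : Fin (ns ⟨lq, hlq⟩)) (b : Fin (ns ⟨lq + 1, hlv⟩)),
              A' (Sum.inl ⟨⟨lq, hlq⟩, a⟩) (Sum.inl ⟨⟨lq + 1, hlv⟩, b⟩) = As ⟨lq, hlq⟩ hlv a b :=
            fun a b => hblk₁ ⟨lq, hlq⟩ hlv a b
          simp only [hreq]
          by_cases hd : ((⟨lq, hlq⟩ : Fin j) : ℕ) < k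
          · rw [Finset.sum_eq_zero fun a _ => by rw [if_pos hd]; ring]
            by_cases h : (Sum.inl ⟨⟨lq + 1, hlv⟩, b⟩ : (Σ ℓ : Fin j, Fin (ns ℓ)) ⊕ Fin m)
                = Sum.inl ⟨⟨lq + 1, hlv⟩, b'⟩
            · rw [if_pos h, Sum.elim_inl,
                if_pos (show ((⟨⟨lq + 1, hlv⟩, b⟩ : Σ ℓ : Fin j, Fin (ns ℓ)).1 : ℕ) < k + 1 by
                  have h9 : ((⟨⟨lq + 1, hlv⟩, b⟩ : Σ ℓ : Fin j, Fin (ns ℓ)).1 : ℕ) = lq + 1 := rfl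
                  have h8 : ((⟨lq, hlq⟩ : Fin j) : ℕ) = lq := rfl
                  omega)]
            · rw [if_neg h]
          · simp only [if_neg hd, one_mul]
            have h2 : ∑ a, star (As ⟨lq, hlq⟩ hlv a b) * As ⟨lq, hlq⟩ hlv a b'
                = ((As ⟨lq, hlq⟩ hlv)ᴴ * As ⟨lq, hlq⟩ hlv) b b' := by
              rw [Matrix.mul_apply]
              simp [Matrix.conjTranspose_apply]
            rw [h2, hAs]
            by_cases hbb : b = b'
            · subst hbb
              rw [Matrix.one_apply_eq, if_pos rfl, Sum.elim_inl,
                if_neg (show ¬ ((⟨⟨lq + 1, hlv⟩, b⟩ : Σ ℓ : Fin j, Fin (ns ℓ)).1 : ℕ) < k + 1 by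
                  have h9 : ((⟨⟨lq + 1, hlv⟩, b⟩ : Σ ℓ : Fin j, Fin (ns ℓ)).1 : ℕ) = lq + 1 := rfl
                  have h8 : ((⟨lq, hlq⟩ : Fin j) : ℕ) = lq := rfl
                  omega)]
            · rw [Matrix.one_apply_ne hbb, if_neg (by simp [hbb])]
        · rw [Finset.sum_eq_zero fun a _ => by
            rw [hblk₂ ⟨lq, hlq⟩ ℓ' a b' (by exact hℓ')]; ring]
          rw [if_neg (fun hcon => by
            apply hℓ'
            have h5 : (⟨⟨lq + 1, hlv⟩, b⟩ : Σ ℓ : Fin j, Fin (ns ℓ)) = ⟨ℓ', b'⟩ :=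
              Sum.inl.inj hcon
            have h6 := congrArg (fun s : Σ ℓ : Fin j, Fin (ns ℓ) => (s.1 : ℕ)) h5
            simpa using h6.symm)]
    · -- inl inr
      simp only [hblk₆, star_zero, zero_mul, Finset.sum_const_zero, add_zero]
      rw [Matrix.diagonal_apply, if_neg (by simp)]
      refine Finset.sum_eq_zero fun ℓ'' _ => Finset.sum_eq_zero fun a _ => ?_
      by_cases hc : (ℓ : ℕ) = (ℓ'' : ℕ) + 1
      · rw [hblk₄ ℓ'' (by omega) a b']; ring
      · rw [hblk₂ _ _ _ _ hc]; simp
    · -- inr inl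
      simp only [hblk₆, mul_zero, Finset.sum_const_zero, add_zero]
      rw [Matrix.diagonal_apply, if_neg (by simp)]
      refine Finset.sum_eq_zero fun ℓ'' _ => Finset.sum_eq_zero fun a _ => ?_
      by_cases hc : (ℓ' : ℕ) = (ℓ'' : ℕ) + 1
      · rw [hblk₄ ℓ'' (by omega) a b]; simp
      · rw [hblk₂ _ _ _ _ hc]; ring
    · -- inr inr
      rw [Finset.sum_eq_single_of_mem (⟨j - 1, Nat.sub_lt hj Nat.one_pos⟩ : Fin j)
        (Finset.mem_univ _)
        (fun x _ hx => Finset.sum_eq_zero fun a _ => by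
          rw [hblk₄ x (fun hcon => hx (Fin.ext (by simpa using hcon))) a b]
          simp)]
      simp only [hblk₃, hblk₅]
      have hsum1 : ∑ a, star (B a b) *
          ((if ((⟨j - 1, Nat.sub_lt hj Nat.one_pos⟩ : Fin j) : ℕ) < k then (0:ℂ) else 1) * B a b')
          = (Bᴴ * B) b b' := by
        rw [Matrix.mul_apply]
        refine Finset.sum_congr rfl fun a _ => ?_
        rw [if_neg (show ¬ (j - 1 < k) by omega), one_mul, Matrix.conjTranspose_apply]
      have hsum2 : ∑ a, star (C a b) * ((if j < k then (0:ℂ) else 1) * C a b')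
          = (Cᴴ * C) b b' := by
        rw [Matrix.mul_apply]
        refine Finset.sum_congr rfl fun a _ => ?_
        rw [if_neg (by omega), one_mul, Matrix.conjTranspose_apply]
      rw [hsum1, hsum2, ← Matrix.add_apply, hBC, Matrix.diagonal_apply]
      by_cases hbb : b = b'
      · subst hbb
        rw [Matrix.one_apply_eq, if_pos rfl, Sum.elim_inr, if_neg (by omega)]
      · rw [Matrix.one_apply_ne hbb, if_neg (by simp [hbb])]
  -- kernel projection after j steps, by induction
  have hQ : ∀ k, k ≤ j → (A' ^ k)ᴴ * A' ^ k = Matrix.diagonal (Sum.elim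
      (fun s : Σ ℓ : Fin j, Fin (ns ℓ) => if (s.1 : ℕ) < k then (0:ℂ) else 1)
      (fun _ : Fin m => if j < k then (0:ℂ) else 1)) := by
    intro k
    induction k with
    | zero =>
      intro _
      have h0 : (Sum.elim
          (fun s : Σ ℓ : Fin j, Fin (ns ℓ) => if (s.1 : ℕ) < 0 then (0:ℂ) else 1)
          (fun _ : Fin m => if j < 0 then (0:ℂ) else 1)) = fun _ => (1:ℂ) := by
        funext i
        rcases i with s | b <;> simp
      rw [pow_zero, Matrix.conjTranspose_one, Matrix.one_mul, h0, Matrix.diagonal_one]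
    | succ k IH =>
      intro hk1
      calc (A' ^ (k+1))ᴴ * A' ^ (k+1)
          = A'ᴴ * (((A' ^ k)ᴴ * A' ^ k) * A') := by
            rw [pow_succ, Matrix.conjTranspose_mul]
            simp only [Matrix.mul_assoc]
        _ = A'ᴴ * (Matrix.diagonal (Sum.elim
              (fun s : Σ ℓ : Fin j, Fin (ns ℓ) => if (s.1 : ℕ) < k then (0:ℂ) else 1)
              (fun _ : Fin m => if j < k then (0:ℂ) else 1)) * A') := by
            rw [IH (by omega)]
        _ = _ := hstep k (by omega)
  -- identify block structure of A'
  have hT21 : A'.toBlocks₂₁ = 0 := by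
    ext a s
    rcases s with ⟨ℓ, b⟩
    exact hblk₆ a ℓ b
  have hT22 : A'.toBlocks₂₂ = C := by
    ext a b
    exact hblk₅ a b
  have hA'blocks : A' = Matrix.fromBlocks A'.toBlocks₁₁ A'.toBlocks₁₂ 0 C := by
    rw [← hT21, ← hT22, Matrix.fromBlocks_toBlocks]
  have hconj : ∀ N : Matrix (Fin m) (Fin m) ℂ,
      A'ᴴ * (Matrix.fromBlocks 0 0 0 N * A') = Matrix.fromBlocks 0 0 0 (Cᴴ * (N * C)) := by
    intro N
    conv_lhs => rw [hA'blocks]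
    rw [Matrix.fromBlocks_conjTranspose, Matrix.fromBlocks_multiply, Matrix.fromBlocks_multiply]
    simp
  have hPj : Matrix.diagonal (Sum.elim
      (fun s : Σ ℓ : Fin j, Fin (ns ℓ) => if (s.1 : ℕ) < j then (0:ℂ) else 1)
      (fun _ : Fin m => if j < j then (0:ℂ) else 1))
      = Matrix.fromBlocks 0 0 0 (1 : Matrix (Fin m) (Fin m) ℂ) := by
    ext c c'
    rcases c with s | b <;> rcases c' with s' | b'
    · rw [Matrix.diagonal_apply]
      by_cases h : (Sum.inl s : (Σ ℓ : Fin j, Fin (ns ℓ)) ⊕ Fin m) = Sum.inl s'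
      · rw [if_pos h, Sum.elim_inl, if_pos s.1.isLt]
        simp [Matrix.fromBlocks]
      · rw [if_neg h]
        simp [Matrix.fromBlocks]
    · simp [Matrix.diagonal_apply, Matrix.fromBlocks]
    · simp [Matrix.diagonal_apply, Matrix.fromBlocks]
    · rw [Matrix.diagonal_apply]
      by_cases h : b = b'
      · subst h
        rw [if_pos rfl, Sum.elim_inr, if_neg (by omega)]
        simp [Matrix.fromBlocks, Matrix.one_apply]
      · rw [if_neg (by simp [h])]
        simp [Matrix.fromBlocks, Matrix.one_apply, h]
  have hE : ∀ ℓ : ℕ, (A' ^ (j + ℓ))ᴴ * A' ^ (j + ℓ)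
      = Matrix.fromBlocks 0 0 0 ((C ^ ℓ)ᴴ * C ^ ℓ) := by
    intro ℓ
    induction ℓ with
    | zero =>
      rw [Nat.add_zero, hQ j le_rfl, hPj, pow_zero, Matrix.conjTranspose_one, Matrix.one_mul]
    | succ ℓ IH =>
      calc (A' ^ (j + (ℓ+1)))ᴴ * A' ^ (j + (ℓ+1))
          = A'ᴴ * (((A' ^ (j+ℓ))ᴴ * A' ^ (j+ℓ)) * A') := by
            rw [show j + (ℓ+1) = (j+ℓ) + 1 from rfl, pow_succ, Matrix.conjTranspose_mul]
            simp only [Matrix.mul_assoc]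
        _ = A'ᴴ * (Matrix.fromBlocks 0 0 0 ((C ^ ℓ)ᴴ * C ^ ℓ) * A') := by rw [IH]
        _ = Matrix.fromBlocks 0 0 0 (Cᴴ * (((C ^ ℓ)ᴴ * C ^ ℓ) * C)) := hconj _
        _ = Matrix.fromBlocks 0 0 0 ((C ^ (ℓ+1))ᴴ * C ^ (ℓ+1)) := by
            rw [pow_succ, Matrix.conjTranspose_mul]
            simp only [Matrix.mul_assoc]
  intro ℓ
  rw [isPartialIsometry_iff_idem, isPartialIsometry_iff_idem, hE ℓ,
    Matrix.fromBlocks_multiply]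
  simp only [Matrix.mul_zero, Matrix.zero_mul, add_zero, zero_add, Matrix.fromBlocks_inj,
    eq_self_iff_true, true_and, and_true]

end
end

section
/- Let A′ be the n-by-n upper-triangular block matrix on ℂ^{n₁} ⊕ ⋯ ⊕ ℂ^{n_j} ⊕ ℂ^m whose (ℓ, ℓ+1) block is A_ℓ for 1 ≤ ℓ ≤ j − 1, whose (j, j+1) block is B, whose (j+1, j+1) block is C, and all of whose other blocks are zero, where A_ℓ*A_ℓ = I_{n_{ℓ+1}} for 1 ≤ ℓ ≤ j − 1 and B*B + C*C = I_m. Then for every integer ℓ ≥ 0, the kernel of A′^{j+ℓ} equals ℂ^{n₁} ⊕ ⋯ ⊕ ℂ^{n_j} ⊕ ker C^ℓ; in particular dim ker A′^{j+ℓ} = (n₁ + ⋯ + n_j) + dim ker C^ℓ. -/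
open Matrix

noncomputable section

lemma aux_mem_ker {κ : Type*} [Fintype κ] [DecidableEq κ] (M : Matrix κ κ ℂ)
    (x : EuclideanSpace ℂ κ) :
    x ∈ LinearMap.ker (Matrix.toEuclideanLin M) ↔ M.mulVec x = 0 := by
  rw [LinearMap.mem_ker, Matrix.toEuclideanLin_apply, WithLp.toLp_eq_zero]

lemma aux_inj {κ κ' : Type*} [Fintype κ] [Fintype κ'] [DecidableEq κ] [DecidableEq κ']
    (M : Matrix κ κ' ℂ) (h : Mᴴ * M = 1) (v : κ' → ℂ) (hv : M.mulVec v = 0) : v = 0 := by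
  have h2 : (Mᴴ * M).mulVec v = 0 := by
    rw [← mulVec_mulVec, hv, mulVec_zero]
  rwa [h, one_mulVec] at h2

set_option maxHeartbeats 1000000 in
/-- For the block matrix `A'` on `ℂ^{n₁} ⊕ ⋯ ⊕ ℂ^{n_j} ⊕ ℂ^m` with superdiagonal blocks
`A₁, …, A_{j-1}` (with `A_ℓ* A_ℓ = I`), `(j, j+1)` block `B`, `(j+1, j+1)` block `C`
(with `B*B + C*C = I`), and all other blocks zero: for every `ℓ ≥ 0`, the kernel of
`A'^(j+ℓ)` equals `ℂ^{n₁} ⊕ ⋯ ⊕ ℂ^{n_j} ⊕ ker C^ℓ` (i.e. membership is determined by the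
`ℂ^m`-component lying in `ker C^ℓ`); in particular
`dim ker A'^(j+ℓ) = (n₁ + ⋯ + n_j) + dim ker C^ℓ`. -/
theorem ker_pow_of_blockForm (j m : ℕ) (hj : 0 < j) (ns : Fin j → ℕ)
    (A' : Matrix ((Σ ℓ : Fin j, Fin (ns ℓ)) ⊕ Fin m) ((Σ ℓ : Fin j, Fin (ns ℓ)) ⊕ Fin m) ℂ)
    (As : ∀ (ℓ : Fin j) (h : (ℓ : ℕ) + 1 < j),
      Matrix (Fin (ns ℓ)) (Fin (ns ⟨(ℓ : ℕ) + 1, h⟩)) ℂ)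
    (B : Matrix (Fin (ns ⟨j - 1, Nat.sub_lt hj Nat.one_pos⟩)) (Fin m) ℂ)
    (C : Matrix (Fin m) (Fin m) ℂ)
    (hAs : ∀ (ℓ : Fin j) (h : (ℓ : ℕ) + 1 < j), (As ℓ h)ᴴ * As ℓ h = 1)
    (hBC : Bᴴ * B + Cᴴ * C = 1)
    (hblk₁ : ∀ (ℓ : Fin j) (h : (ℓ : ℕ) + 1 < j) (a : Fin (ns ℓ))
      (b : Fin (ns ⟨(ℓ : ℕ) + 1, h⟩)),
      A' (Sum.inl ⟨ℓ, a⟩) (Sum.inl ⟨⟨(ℓ : ℕ) + 1, h⟩, b⟩) = As ℓ h a b)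
    (hblk₂ : ∀ (ℓ ℓ' : Fin j) (a : Fin (ns ℓ)) (b : Fin (ns ℓ')), (ℓ' : ℕ) ≠ (ℓ : ℕ) + 1 →
      A' (Sum.inl ⟨ℓ, a⟩) (Sum.inl ⟨ℓ', b⟩) = 0)
    (hblk₃ : ∀ (a : Fin (ns ⟨j - 1, Nat.sub_lt hj Nat.one_pos⟩)) (b : Fin m),
      A' (Sum.inl ⟨⟨j - 1, Nat.sub_lt hj Nat.one_pos⟩, a⟩) (Sum.inr b) = B a b)
    (hblk₄ : ∀ (ℓ : Fin j), (ℓ : ℕ) ≠ j - 1 → ∀ (a : Fin (ns ℓ)) (b : Fin m),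
      A' (Sum.inl ⟨ℓ, a⟩) (Sum.inr b) = 0)
    (hblk₅ : ∀ a b : Fin m, A' (Sum.inr a) (Sum.inr b) = C a b)
    (hblk₆ : ∀ (a : Fin m) (ℓ : Fin j) (b : Fin (ns ℓ)), A' (Sum.inr a) (Sum.inl ⟨ℓ, b⟩) = 0) :
    ∀ ℓ : ℕ,
      (∀ x : EuclideanSpace ℂ ((Σ ℓ' : Fin j, Fin (ns ℓ')) ⊕ Fin m),
        x ∈ LinearMap.ker (Matrix.toEuclideanLin (A' ^ (j + ℓ))) ↔
          (WithLp.toLp 2 (fun b => x (Sum.inr b)) : EuclideanSpace ℂ (Fin m)) ∈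
            LinearMap.ker (Matrix.toEuclideanLin (C ^ ℓ))) ∧
      Module.finrank ℂ (LinearMap.ker (Matrix.toEuclideanLin (A' ^ (j + ℓ)))) =
        (∑ ℓ' : Fin j, ns ℓ') +
          Module.finrank ℂ (LinearMap.ker (Matrix.toEuclideanLin (C ^ ℓ))) := by
  classical
  intro ℓ
  -- structural lemmas
  have L1 : ∀ (v : ((Σ ℓ : Fin j, Fin (ns ℓ)) ⊕ Fin m) → ℂ) (b : Fin m),
      (A'.mulVec v) (Sum.inr b) = C.mulVec (fun b' => v (Sum.inr b')) b := by
    intro v b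
    simp only [mulVec, dotProduct]
    rw [Fintype.sum_sum_type]
    rw [Finset.sum_eq_zero (fun s _ => ?_), zero_add]
    · exact Finset.sum_congr rfl fun b' _ => by rw [hblk₅]
    · obtain ⟨ℓ', c⟩ := s
      rw [hblk₆, zero_mul]
  have L2 : ∀ (v : ((Σ ℓ : Fin j, Fin (ns ℓ)) ⊕ Fin m) → ℂ)
      (a : Fin (ns ⟨j - 1, Nat.sub_lt hj Nat.one_pos⟩)),
      (A'.mulVec v) (Sum.inl ⟨⟨j - 1, Nat.sub_lt hj Nat.one_pos⟩, a⟩) =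
        B.mulVec (fun b => v (Sum.inr b)) a := by
    intro v a
    simp only [mulVec, dotProduct]
    rw [Fintype.sum_sum_type]
    rw [Finset.sum_eq_zero (fun s _ => ?_), zero_add]
    · exact Finset.sum_congr rfl fun b' _ => by rw [hblk₃]
    · obtain ⟨ℓ', c⟩ := s
      rw [hblk₂ _ _ _ _ (by simp only []; omega), zero_mul]
  have L3 : ∀ (v : ((Σ ℓ : Fin j, Fin (ns ℓ)) ⊕ Fin m) → ℂ) (ℓ₀ : Fin j)
      (h : (ℓ₀ : ℕ) + 1 < j) (a : Fin (ns ℓ₀)),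
      (A'.mulVec v) (Sum.inl ⟨ℓ₀, a⟩) =
        (As ℓ₀ h).mulVec (fun b => v (Sum.inl ⟨⟨(ℓ₀ : ℕ) + 1, h⟩, b⟩)) a := by
    intro v ℓ₀ h a
    simp only [mulVec, dotProduct]
    rw [Fintype.sum_sum_type]
    rw [Finset.sum_eq_zero (ι := Fin m) (fun b' _ => ?_), add_zero]
    swap
    · rw [hblk₄ ℓ₀ (by omega), zero_mul]
    rw [← Finset.univ_sigma_univ, Finset.sum_sigma]
    rw [Finset.sum_eq_single (⟨(ℓ₀ : ℕ) + 1, h⟩ : Fin j)]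
    · exact Finset.sum_congr rfl fun b' _ => by rw [hblk₁]
    · intro ℓ' _ hne
      exact Finset.sum_eq_zero fun b' _ => by
        rw [hblk₂ _ _ _ _ (fun hc => hne (Fin.ext hc)), zero_mul]
    · intro hmem
      exact absurd (Finset.mem_univ _) hmem
  -- the inr component of powers
  have P1 : ∀ (k : ℕ) (v : ((Σ ℓ : Fin j, Fin (ns ℓ)) ⊕ Fin m) → ℂ) (b : Fin m),
      ((A' ^ k).mulVec v) (Sum.inr b) = ((C ^ k).mulVec (fun b' => v (Sum.inr b'))) b := by
    intro k
    induction k with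
    | zero => intro v b; simp [one_mulVec]
    | succ k ih =>
      intro v b
      rw [pow_succ', ← mulVec_mulVec, L1]
      have hfun : (fun b' => ((A' ^ k).mulVec v) (Sum.inr b'))
          = (C ^ k).mulVec (fun b' => v (Sum.inr b')) := funext fun b' => ih v b'
      rw [hfun, mulVec_mulVec, ← pow_succ']
  -- easy direction core
  have E : ∀ (t : ℕ) (v : ((Σ ℓ : Fin j, Fin (ns ℓ)) ⊕ Fin m) → ℂ),
      (∀ b, v (Sum.inr b) = 0) →
      ∀ (i : Fin j) (a : Fin (ns i)), j ≤ (i : ℕ) + t →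
        ((A' ^ t).mulVec v) (Sum.inl ⟨i, a⟩) = 0 := by
    intro t
    induction t with
    | zero => intro v hv i a hle; exact absurd hle (by have := i.isLt; omega)
    | succ t ih =>
      intro v hv i a hle
      rw [pow_succ', ← mulVec_mulVec]
      by_cases h : (i : ℕ) + 1 < j
      · rw [L3 _ i h]
        have hz : (fun b => ((A' ^ t).mulVec v) (Sum.inl ⟨⟨(i : ℕ) + 1, h⟩, b⟩))
            = (0 : Fin (ns ⟨(i : ℕ) + 1, h⟩) → ℂ) :=
          funext fun b => ih v hv ⟨(i : ℕ) + 1, h⟩ b (by show j ≤ (i : ℕ) + 1 + t; omega)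
        rw [hz, mulVec_zero]
        rfl
      · have hi : (i : ℕ) = j - 1 := by have := i.isLt; omega
        obtain rfl : i = ⟨j - 1, Nat.sub_lt hj Nat.one_pos⟩ := Fin.ext hi
        rw [L2]
        have hz : (fun b => ((A' ^ t).mulVec v) (Sum.inr b)) = (0 : Fin m → ℂ) := by
          funext b
          rw [P1]
          have h0 : (fun b' => v (Sum.inr b')) = (0 : Fin m → ℂ) := funext hv
          rw [h0, mulVec_zero]
        rw [hz, mulVec_zero]
        rfl
  -- hard direction chain lemma
  have R : ∀ (d : ℕ) (i : Fin j) (k : ℕ)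
      (x : ((Σ ℓ : Fin j, Fin (ns ℓ)) ⊕ Fin m) → ℂ),
      (i : ℕ) + d + 1 = j →
      (∀ a, ((A' ^ (k + 1 + d)).mulVec x) (Sum.inl ⟨i, a⟩) = 0) →
      B.mulVec ((C ^ k).mulVec fun b => x (Sum.inr b)) = 0 := by
    intro d
    induction d with
    | zero =>
      intro i k x hij hz
      obtain rfl : i = ⟨j - 1, Nat.sub_lt hj Nat.one_pos⟩ :=
        Fin.ext (by show (i : ℕ) = j - 1; omega)
      funext a
      have hza := hz a
      rw [Nat.add_zero, pow_succ', ← mulVec_mulVec, L2] at hza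
      have hfun : (fun b => ((A' ^ k).mulVec x) (Sum.inr b))
          = (C ^ k).mulVec fun b => x (Sum.inr b) := funext fun b => P1 k x b
      rw [hfun] at hza
      exact hza
    | succ d ih =>
      intro i k x hij hz
      have h : (i : ℕ) + 1 < j := by omega
      have hm : (As i h).mulVec
          (fun b => ((A' ^ (k + 1 + d)).mulVec x) (Sum.inl ⟨⟨(i : ℕ) + 1, h⟩, b⟩)) = 0 := by
        funext a
        have hza := hz a
        rw [show k + 1 + (d + 1) = (k + 1 + d) + 1 from rfl, pow_succ',
          ← mulVec_mulVec, L3 _ i h] at hza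
        exact hza
      have hz2 := aux_inj (As i h) (hAs i h) _ hm
      exact ih ⟨(i : ℕ) + 1, h⟩ k x (by show (i : ℕ) + 1 + d + 1 = j; omega)
        (fun a => congrFun hz2 a)
  have hiff : ∀ x : EuclideanSpace ℂ ((Σ ℓ' : Fin j, Fin (ns ℓ')) ⊕ Fin m),
      x ∈ LinearMap.ker (Matrix.toEuclideanLin (A' ^ (j + ℓ))) ↔
        (WithLp.toLp 2 (fun b => x (Sum.inr b)) : EuclideanSpace ℂ (Fin m)) ∈
          LinearMap.ker (Matrix.toEuclideanLin (C ^ ℓ)) := by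
    intro x
    rw [aux_mem_ker, aux_mem_ker]
    simp only [WithLp.ofLp_toLp]
    constructor
    · intro hker
      have hBzero : ∀ s, s < j →
          B.mulVec ((C ^ (ℓ + s)).mulVec fun b => x (Sum.inr b)) = 0 := by
        intro s hs
        refine R (j - 1 - s) ⟨s, hs⟩ (ℓ + s) x (by show s + (j - 1 - s) + 1 = j; omega) ?_
        intro a
        rw [show ℓ + s + 1 + (j - 1 - s) = j + ℓ by omega, hker]
        rfl
      have hCzero : ∀ t, t ≤ j →
          (C ^ (ℓ + (j - t))).mulVec (fun b => x (Sum.inr b)) = 0 := by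
        intro t
        induction t with
        | zero =>
          intro _
          funext b
          have hp := P1 (j + ℓ) x b
          rw [hker] at hp
          rw [show ℓ + (j - 0) = j + ℓ by omega]
          exact hp.symm
        | succ t iht =>
          intro hle
          have h1 := hBzero (j - (t + 1)) (by omega)
          have h2 : C.mulVec ((C ^ (ℓ + (j - (t + 1)))).mulVec fun b => x (Sum.inr b)) = 0 := by
            rw [mulVec_mulVec, ← pow_succ',
              show ℓ + (j - (t + 1)) + 1 = ℓ + (j - t) by omega]
            exact iht (by omega)
          have hcalc : (C ^ (ℓ + (j - (t + 1)))).mulVec (fun b => x (Sum.inr b))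
              = (Bᴴ * B + Cᴴ * C).mulVec
                ((C ^ (ℓ + (j - (t + 1)))).mulVec fun b => x (Sum.inr b)) := by
            rw [hBC, one_mulVec]
          rw [hcalc, add_mulVec, ← mulVec_mulVec, ← mulVec_mulVec, h1, h2,
            mulVec_zero, mulVec_zero, add_zero]
      have hfin := hCzero j le_rfl
      rwa [show ℓ + (j - j) = ℓ by omega] at hfin
    · intro hC
      funext s
      rcases s with ⟨i, a⟩ | b
      · rw [pow_add, ← mulVec_mulVec]
        refine E j ((A' ^ ℓ).mulVec x) ?_ i a (by omega)
        intro b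
        rw [P1]
        exact congrFun hC b
      · rw [P1, pow_add, ← mulVec_mulVec, hC, mulVec_zero]
        rfl
  refine ⟨hiff, ?_⟩
  let e : (((Σ ℓ' : Fin j, Fin (ns ℓ')) → ℂ) ×
      (LinearMap.ker (Matrix.toEuclideanLin (C ^ ℓ)))) ≃ₗ[ℂ]
      (LinearMap.ker (Matrix.toEuclideanLin (A' ^ (j + ℓ)))) :=
    { toFun := fun p => ⟨(WithLp.toLp 2 (Sum.elim p.1 (p.2 : EuclideanSpace ℂ (Fin m)).ofLp) :
        EuclideanSpace ℂ ((Σ ℓ' : Fin j, Fin (ns ℓ')) ⊕ Fin m)), (hiff _).mpr p.2.2⟩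
      map_add' := fun p q => Subtype.ext (PiLp.ext fun s => by cases s <;> rfl)
      map_smul' := fun c p => Subtype.ext (PiLp.ext fun s => by cases s <;> rfl)
      invFun := fun xp => ((fun s => xp.1 (Sum.inl s)),
        ⟨WithLp.toLp 2 (fun b => xp.1 (Sum.inr b)), (hiff _).mp xp.2⟩)
      left_inv := fun p => Prod.ext (funext fun s => rfl) (Subtype.ext (PiLp.ext fun b => rfl))
      right_inv := fun xp => Subtype.ext (PiLp.ext fun s => by cases s <;> rfl) }
  rw [← LinearEquiv.finrank_eq e, Module.finrank_prod]
  congr 1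
  rw [Module.finrank_pi, Fintype.card_sigma]
  simp

end
end

section
/- Let A₁ be an n₁-by-n₁ complex matrix and A₂ an n₂-by-n₂ complex matrix, and let A = A₁ ⊕ A₂ be their block diagonal direct sum. Then a(A) = max{a(A₁), a(A₂)}, and for every integer ℓ ≥ 1, A^ℓ is a partial isometry if and only if both A₁^ℓ and A₂^ℓ are partial isometries; consequently p(A) = min{p(A₁), p(A₂)}. -/
open Matrix

noncomputable section

section Aux

variable {ι : Type*} [Fintype ι] [DecidableEq ι]

private lemma toE_mul' (A B : Matrix ι ι ℂ) :
    Matrix.toEuclideanLin (A * B) = (Matrix.toEuclideanLin A) ∘ₗ (Matrix.toEuclideanLin B) := by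
  simp [Matrix.toEuclideanLin_eq_toLin, Matrix.toLin_mul _ (PiLp.basisFun 2 ℂ ι)]

private lemma toE_pow' (A : Matrix ι ι ℂ) (k : ℕ) :
    Matrix.toEuclideanLin (A ^ k) = (Matrix.toEuclideanLin A) ^ k := by
  induction k with
  | zero => simp [Matrix.toEuclideanLin_eq_toLin, Matrix.toLin_one]; rfl
  | succ k ih => rw [pow_succ, toE_mul', ih, pow_succ]; rfl

private lemma toE_one' :
    Matrix.toEuclideanLin (1 : Matrix ι ι ℂ) = LinearMap.id := by
  simp [Matrix.toEuclideanLin_eq_toLin, Matrix.toLin_one]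

private lemma one_isPI' : (1 : Matrix ι ι ℂ).IsPartialIsometry := by
  intro x _; rw [toE_one']; rfl

private lemma ker_pow_mono' (A : Matrix ι ι ℂ) (k : ℕ) :
    LinearMap.ker (Matrix.toEuclideanLin (A ^ k)) ≤
      LinearMap.ker (Matrix.toEuclideanLin (A ^ (k + 1))) := by
  intro x hx
  rw [LinearMap.mem_ker, toE_pow'] at hx ⊢
  rw [pow_succ']
  show Matrix.toEuclideanLin A (((Matrix.toEuclideanLin A) ^ k) x) = 0
  rw [hx, map_zero]

/-- The ascent set of a matrix. -/
private def ascSet (A : Matrix ι ι ℂ) : Set ℕ :=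
  {k : ℕ | LinearMap.ker (Matrix.toEuclideanLin (A ^ k)) =
    LinearMap.ker (Matrix.toEuclideanLin (A ^ (k + 1)))}

private lemma ascSet_nonempty (A : Matrix ι ι ℂ) : (ascSet A).Nonempty := by
  obtain ⟨k, -, hk⟩ := Module.End.exists_ker_pow_eq_ker_pow_succ (Matrix.toEuclideanLin A)
  exact ⟨k, by simpa [ascSet, toE_pow'] using hk⟩

private lemma ascSet_upward {A : Matrix ι ι ℂ} {k m : ℕ} (hk : k ∈ ascSet A) (hkm : k ≤ m) :
    m ∈ ascSet A := by
  simp only [ascSet, Set.mem_setOf_eq, toE_pow'] at hk ⊢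
  have h1 := Module.End.ker_pow_constant hk (m - k)
  have h2 := Module.End.ker_pow_constant hk (m + 1 - k)
  rw [show k + (m - k) = m by omega] at h1
  rw [show k + (m + 1 - k) = m + 1 by omega] at h2
  rw [← h1, ← h2]

private lemma ascent_mem (A : Matrix ι ι ℂ) : A.ascent ∈ ascSet A :=
  Nat.sInf_mem (ascSet_nonempty A)

private lemma ascent_le {A : Matrix ι ι ℂ} {k : ℕ} (hk : k ∈ ascSet A) : A.ascent ≤ k :=
  Nat.sInf_le hk

/-- downward-closed membership lemma for `ℕ∞` suprema. -/
private lemma mem_of_le_sSup' {S : Set ℕ} (h0 : 0 ∈ S)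
    (hdc : ∀ {a b : ℕ}, a ≤ b → b ∈ S → a ∈ S) {n : ℕ}
    (hn : (n : ℕ∞) ≤ sSup ((↑) '' S)) : n ∈ S := by
  by_contra hns
  rcases Nat.eq_zero_or_pos n with rfl | hpos
  · exact hns h0
  have hb : ∀ j ∈ S, j < n := by
    intro j hj
    by_contra hlt
    exact hns (hdc (le_of_not_gt hlt) hj)
  have h1 : sSup (((↑) : ℕ → ℕ∞) '' S) ≤ (↑(n - 1) : ℕ∞) := by
    apply sSup_le
    rintro x ⟨j, hj, rfl⟩
    exact_mod_cast Nat.le_sub_one_of_lt (hb j hj)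
  have h2 := le_trans hn h1
  have h3 : n ≤ n - 1 := by exact_mod_cast h2
  omega

private lemma sSup_inter_eq_min' {S T : Set ℕ} (hS0 : 0 ∈ S) (hT0 : 0 ∈ T)
    (hSdc : ∀ {a b : ℕ}, a ≤ b → b ∈ S → a ∈ S)
    (hTdc : ∀ {a b : ℕ}, a ≤ b → b ∈ T → a ∈ T) :
    sSup (((↑) : ℕ → ℕ∞) '' (S ∩ T)) = min (sSup ((↑) '' S)) (sSup ((↑) '' T)) := by
  apply le_antisymm
  · exact le_min (sSup_le_sSup (Set.image_mono Set.inter_subset_left))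
      (sSup_le_sSup (Set.image_mono Set.inter_subset_right))
  · set m := min (sSup (((↑) : ℕ → ℕ∞) '' S)) (sSup ((↑) '' T)) with hm
    rcases eq_or_ne m ⊤ with htop | hne
    · obtain ⟨hS, hT⟩ := min_eq_top.1 htop
      rw [htop, top_le_iff]
      have hall : ∀ n : ℕ, (n : ℕ∞) ≤ sSup (((↑) : ℕ → ℕ∞) '' (S ∩ T)) := by
        intro n
        have hnS : n ∈ S := mem_of_le_sSup' hS0 hSdc (hS ▸ le_top)
        have hnT : n ∈ T := mem_of_le_sSup' hT0 hTdc (hT ▸ le_top)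
        exact le_sSup ⟨n, ⟨hnS, hnT⟩, rfl⟩
      rcases eq_or_ne (sSup (((↑) : ℕ → ℕ∞) '' (S ∩ T))) ⊤ with h | h
      · rw [h]
      · obtain ⟨k, hk⟩ := WithTop.ne_top_iff_exists.1 h
        have h2 := hall (k + 1)
        rw [← hk] at h2
        have h3 : k + 1 ≤ k := Nat.cast_le.1 h2
        omega
    · obtain ⟨k, hk⟩ := WithTop.ne_top_iff_exists.1 hne
      rw [← hk]
      have hkS : k ∈ S := mem_of_le_sSup' hS0 hSdc (hk.le.trans (min_le_left _ _))
      have hkT : k ∈ T := mem_of_le_sSup' hT0 hTdc (hk.le.trans (min_le_right _ _))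
      exact le_sSup ⟨k, ⟨hkS, hkT⟩, rfl⟩

end Aux

section Blocks

/-- Join two Euclidean vectors into one on the sum index type. -/
private def JJ {n₁ n₂ : ℕ} (u : EuclideanSpace ℂ (Fin n₁)) (v : EuclideanSpace ℂ (Fin n₂)) :
    EuclideanSpace ℂ (Fin n₁ ⊕ Fin n₂) := WithLp.toLp 2 (Sum.elim u v)

private lemma J_decomp {n₁ n₂ : ℕ} (x : EuclideanSpace ℂ (Fin n₁ ⊕ Fin n₂)) :
    x = JJ (WithLp.toLp 2 fun i => x (Sum.inl i)) (WithLp.toLp 2 fun i => x (Sum.inr i)) := by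
  ext i; cases i <;> rfl

variable {n₁ n₂ : ℕ} (B₁ : Matrix (Fin n₁) (Fin n₁) ℂ) (B₂ : Matrix (Fin n₂) (Fin n₂) ℂ)

private lemma toE_J (u : EuclideanSpace ℂ (Fin n₁)) (v : EuclideanSpace ℂ (Fin n₂)) :
    Matrix.toEuclideanLin (Matrix.fromBlocks B₁ 0 0 B₂) (JJ u v)
      = JJ (Matrix.toEuclideanLin B₁ u) (Matrix.toEuclideanLin B₂ v) := by
  ext i
  have h : (Matrix.fromBlocks B₁ 0 0 B₂) *ᵥ (Sum.elim u v) =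
      Sum.elim (B₁ *ᵥ u) (B₂ *ᵥ v) := by
    rw [Matrix.fromBlocks_mulVec]; simp
  rw [Matrix.toEuclideanLin_apply]
  exact congrFun h i

private lemma J_eq_zero {u : EuclideanSpace ℂ (Fin n₁)} {v : EuclideanSpace ℂ (Fin n₂)} :
    JJ u v = 0 ↔ u = 0 ∧ v = 0 := by
  constructor
  · intro h
    constructor
    · ext i; exact congrArg (fun w : EuclideanSpace ℂ (Fin n₁ ⊕ Fin n₂) => w (Sum.inl i)) h
    · ext i; exact congrArg (fun w : EuclideanSpace ℂ (Fin n₁ ⊕ Fin n₂) => w (Sum.inr i)) h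
  · rintro ⟨rfl, rfl⟩; ext i; cases i <;> rfl

private lemma norm_J (u : EuclideanSpace ℂ (Fin n₁)) (v : EuclideanSpace ℂ (Fin n₂)) :
    ‖JJ u v‖ = Real.sqrt (‖u‖ ^ 2 + ‖v‖ ^ 2) := by
  rw [EuclideanSpace.norm_eq, EuclideanSpace.norm_eq, EuclideanSpace.norm_eq]
  rw [Real.sq_sqrt (by positivity), Real.sq_sqrt (by positivity)]
  rw [Fintype.sum_sum_type]
  rfl

private lemma inner_J (u u' : EuclideanSpace ℂ (Fin n₁)) (v v' : EuclideanSpace ℂ (Fin n₂)) :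
    (inner ℂ (JJ u v) (JJ u' v') : ℂ) = inner ℂ u u' + inner ℂ v v' := by
  simp [PiLp.inner_apply, Fintype.sum_sum_type]
  rfl

private lemma mem_ker_J {u : EuclideanSpace ℂ (Fin n₁)} {v : EuclideanSpace ℂ (Fin n₂)} :
    JJ u v ∈ LinearMap.ker (Matrix.toEuclideanLin (Matrix.fromBlocks B₁ 0 0 B₂)) ↔
      u ∈ LinearMap.ker (Matrix.toEuclideanLin B₁) ∧
      v ∈ LinearMap.ker (Matrix.toEuclideanLin B₂) := by
  simp only [LinearMap.mem_ker, toE_J, J_eq_zero]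

private lemma mem_orth_J {u : EuclideanSpace ℂ (Fin n₁)} {v : EuclideanSpace ℂ (Fin n₂)} :
    JJ u v ∈ (LinearMap.ker (Matrix.toEuclideanLin (Matrix.fromBlocks B₁ 0 0 B₂)))ᗮ ↔
      u ∈ (LinearMap.ker (Matrix.toEuclideanLin B₁))ᗮ ∧
      v ∈ (LinearMap.ker (Matrix.toEuclideanLin B₂))ᗮ := by
  simp only [Submodule.mem_orthogonal]
  constructor
  · intro h
    constructor
    · intro u' hu'
      have := h (JJ u' 0) ((mem_ker_J B₁ B₂).2 ⟨hu', by simp⟩)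
      rwa [inner_J, inner_zero_left, add_zero] at this
    · intro v' hv'
      have := h (JJ 0 v') ((mem_ker_J B₁ B₂).2 ⟨by simp, hv'⟩)
      rwa [inner_J, inner_zero_left, zero_add] at this
  · rintro ⟨h₁, h₂⟩ y hy
    rw [J_decomp (n₁ := n₁) (n₂ := n₂) y] at hy ⊢
    obtain ⟨hy₁, hy₂⟩ := (mem_ker_J B₁ B₂).1 hy
    rw [inner_J, h₁ _ hy₁, h₂ _ hy₂, add_zero]

private lemma pi_block :
    (Matrix.fromBlocks B₁ 0 0 B₂).IsPartialIsometry ↔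
      B₁.IsPartialIsometry ∧ B₂.IsPartialIsometry := by
  constructor
  · intro h
    constructor
    · intro u hu
      have hm := h (JJ u 0) ((mem_orth_J B₁ B₂).2 ⟨hu, Submodule.zero_mem _⟩)
      rw [toE_J, norm_J, norm_J, map_zero] at hm
      simpa [Real.sqrt_sq_eq_abs, abs_of_nonneg (norm_nonneg _)] using hm
    · intro v hv
      have hm := h (JJ 0 v) ((mem_orth_J B₁ B₂).2 ⟨Submodule.zero_mem _, hv⟩)
      rw [toE_J, norm_J, norm_J, map_zero] at hm
      simpa [Real.sqrt_sq_eq_abs, abs_of_nonneg (norm_nonneg _)] using hm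
  · rintro ⟨h₁, h₂⟩ x hx
    rw [J_decomp (n₁ := n₁) (n₂ := n₂) x] at hx ⊢
    obtain ⟨hx₁, hx₂⟩ := (mem_orth_J B₁ B₂).1 hx
    rw [toE_J, norm_J, norm_J, h₁ _ hx₁, h₂ _ hx₂]

private lemma fromBlocks_pow' (k : ℕ) :
    (Matrix.fromBlocks B₁ 0 0 B₂) ^ k = Matrix.fromBlocks (B₁ ^ k) 0 0 (B₂ ^ k) := by
  induction k with
  | zero => simp [Matrix.fromBlocks_one]
  | succ k ih => rw [pow_succ, ih, Matrix.fromBlocks_multiply]; simp [← pow_succ]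

private lemma ascSet_block_iff (k : ℕ) :
    k ∈ ascSet (Matrix.fromBlocks B₁ 0 0 B₂) ↔ k ∈ ascSet B₁ ∧ k ∈ ascSet B₂ := by
  simp only [ascSet, Set.mem_setOf_eq, fromBlocks_pow']
  constructor
  · intro h
    constructor
    · refine le_antisymm (ker_pow_mono' B₁ k) ?_
      intro u hu
      have h1 : JJ u 0 ∈ LinearMap.ker (Matrix.toEuclideanLin
          (Matrix.fromBlocks (B₁ ^ (k + 1)) 0 0 (B₂ ^ (k + 1)))) :=
        (mem_ker_J _ _).2 ⟨hu, Submodule.zero_mem _⟩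
      rw [← h] at h1
      exact ((mem_ker_J _ _).1 h1).1
    · refine le_antisymm (ker_pow_mono' B₂ k) ?_
      intro v hv
      have h1 : JJ 0 v ∈ LinearMap.ker (Matrix.toEuclideanLin
          (Matrix.fromBlocks (B₁ ^ (k + 1)) 0 0 (B₂ ^ (k + 1)))) :=
        (mem_ker_J _ _).2 ⟨Submodule.zero_mem _, hv⟩
      rw [← h] at h1
      exact ((mem_ker_J _ _).1 h1).2
  · rintro ⟨h₁, h₂⟩
    ext x
    rw [J_decomp (n₁ := n₁) (n₂ := n₂) x, mem_ker_J, mem_ker_J, h₁, h₂]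

end Blocks

/-- For a direct sum `A = A₁ ⊕ A₂`: `a(A) = max {a(A₁), a(A₂)}`; for every `ℓ ≥ 1`, `A^ℓ` is a
partial isometry iff both `A₁^ℓ` and `A₂^ℓ` are; and `p(A) = min {p(A₁), p(A₂)}`. -/
theorem ascent_pIndex_fromBlocks (n₁ n₂ : ℕ)
    (A₁ : Matrix (Fin n₁) (Fin n₁) ℂ) (A₂ : Matrix (Fin n₂) (Fin n₂) ℂ) :
    (Matrix.fromBlocks A₁ 0 0 A₂).ascent = max A₁.ascent A₂.ascent ∧
    (∀ ℓ : ℕ, 1 ≤ ℓ →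
      ((Matrix.fromBlocks A₁ 0 0 A₂ ^ ℓ).IsPartialIsometry ↔
        (A₁ ^ ℓ).IsPartialIsometry ∧ (A₂ ^ ℓ).IsPartialIsometry)) ∧
    (Matrix.fromBlocks A₁ 0 0 A₂).pIndex = min A₁.pIndex A₂.pIndex := by
  have hpow : ∀ ℓ : ℕ, ((Matrix.fromBlocks A₁ 0 0 A₂ ^ ℓ).IsPartialIsometry ↔
      (A₁ ^ ℓ).IsPartialIsometry ∧ (A₂ ^ ℓ).IsPartialIsometry) := by
    intro ℓ
    rw [fromBlocks_pow']
    exact pi_block _ _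
  refine ⟨?_, fun ℓ _ => hpow ℓ, ?_⟩
  · -- ascent
    have h₁ := ascent_mem A₁
    have h₂ := ascent_mem A₂
    set K := max A₁.ascent A₂.ascent with hK
    have hK₁ : K ∈ ascSet A₁ := ascSet_upward h₁ (le_max_left _ _)
    have hK₂ : K ∈ ascSet A₂ := ascSet_upward h₂ (le_max_right _ _)
    have hKb : K ∈ ascSet (Matrix.fromBlocks A₁ 0 0 A₂) :=
      (ascSet_block_iff A₁ A₂ K).2 ⟨hK₁, hK₂⟩
    refine le_antisymm (Nat.sInf_le hKb) ?_
    refine le_csInf ⟨K, hKb⟩ ?_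
    intro k hk
    obtain ⟨hk₁, hk₂⟩ := (ascSet_block_iff A₁ A₂ k).1 hk
    exact max_le (ascent_le hk₁) (ascent_le hk₂)
  · -- pIndex
    have hset : {j : ℕ | ∀ i ≤ j, ((Matrix.fromBlocks A₁ 0 0 A₂) ^ i).IsPartialIsometry} =
        {j : ℕ | ∀ i ≤ j, (A₁ ^ i).IsPartialIsometry} ∩
        {j : ℕ | ∀ i ≤ j, (A₂ ^ i).IsPartialIsometry} := by
      ext j
      simp only [Set.mem_setOf_eq, Set.mem_inter_iff]
      constructor
      · intro h
        exact ⟨fun i hi => ((hpow i).1 (h i hi)).1, fun i hi => ((hpow i).1 (h i hi)).2⟩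
      · rintro ⟨ha, hb⟩ i hi
        exact (hpow i).2 ⟨ha i hi, hb i hi⟩
    have h0 : ∀ {m : ℕ} (A : Matrix (Fin m) (Fin m) ℂ),
        0 ∈ {j : ℕ | ∀ i ≤ j, (A ^ i).IsPartialIsometry} := by
      intro m A i hi
      rw [Nat.le_zero.1 hi, pow_zero]
      exact one_isPI'
    have hdc : ∀ {m : ℕ} (A : Matrix (Fin m) (Fin m) ℂ) {a b : ℕ}, a ≤ b →
        b ∈ {j : ℕ | ∀ i ≤ j, (A ^ i).IsPartialIsometry} →
        a ∈ {j : ℕ | ∀ i ≤ j, (A ^ i).IsPartialIsometry} := by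
      intro m A a b hab hb i hi
      exact hb i (hi.trans hab)
    rw [Matrix.pIndex, Matrix.pIndex, Matrix.pIndex, hset]
    exact sSup_inter_eq_min' (h0 A₁) (h0 A₂) (hdc A₁) (hdc A₂)

end
end
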